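/- arXiv:2107.05744 — 9 statements merged into one kernel-verified Lean document; each statement's English description precedes it below -/
import Mathlib

section
/- Let K be a finite field. The set S = {(x, 1−x) : x ∈ K, x ≠ 0, x ≠ 1} is a Sidon set in the group K^× × K^×. -/
/-- Hughes–Cilleruelo: `{(x, y) : x + y = 1, x, y ≠ 0}` is a Sidon set in `K^× × K^×`. -/
theorem hughes_cilleruelo_sidon {K : Type*} [Field K] [Fintype K] :
    ∀ a ∈ {p : Kˣ × Kˣ | (p.1 : K) + (p.2 : K) = 1},
    ∀ b ∈ {p : Kˣ × Kˣ | (p.1 : K) + (p.2 : K) = 1},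
    ∀ c ∈ {p : Kˣ × Kˣ | (p.1 : K) + (p.2 : K) = 1},
    ∀ d ∈ {p : Kˣ × Kˣ | (p.1 : K) + (p.2 : K) = 1},
      a * b = c * d → ({a, b} : Set (Kˣ × Kˣ)) = {c, d} := by
  rintro a ha b hb c hc d hd h
  simp only [Set.mem_setOf_eq] at ha hb hc hd
  have h1 : (a.1 : K) * b.1 = (c.1 : K) * d.1 := by
    have := congrArg (fun p : Kˣ × Kˣ => ((p.1 : K))) h
    simpa using this
  have h2 : (a.2 : K) * b.2 = (c.2 : K) * d.2 := by
    have := congrArg (fun p : Kˣ × Kˣ => ((p.2 : K))) h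
    simpa using this
  have ea : (a.2 : K) = 1 - a.1 := by linear_combination ha
  have eb : (b.2 : K) = 1 - b.1 := by linear_combination hb
  have ec : (c.2 : K) = 1 - c.1 := by linear_combination hc
  have ed : (d.2 : K) = 1 - d.1 := by linear_combination hd
  rw [ea, eb, ec, ed] at h2
  have hsum : (a.1 : K) + b.1 = c.1 + d.1 := by linear_combination h1 - h2
  have hquad : ((a.1 : K) - c.1) * ((a.1 : K) - d.1) = 0 := by
    linear_combination (a.1 : K) * hsum - h1
  have pairK : ((a.1 : K) = c.1 ∧ (b.1 : K) = d.1) ∨ ((a.1 : K) = d.1 ∧ (b.1 : K) = c.1) := by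
    rcases mul_eq_zero.mp hquad with h' | h'
    · exact Or.inl ⟨by linear_combination h', by linear_combination hsum - h'⟩
    · exact Or.inr ⟨by linear_combination h', by linear_combination hsum - h'⟩
  have mk : ∀ u v : Kˣ × Kˣ, (u.1 : K) + u.2 = 1 → (v.1 : K) + v.2 = 1 →
      (u.1 : K) = v.1 → u = v := by
    intro u v hu hv h'
    have h2' : (u.2 : K) = v.2 := by linear_combination hu - hv - h'
    exact Prod.ext (Units.ext h') (Units.ext h2')
  rcases pairK with ⟨h', h''⟩ | ⟨h', h''⟩
  · rw [mk a c ha hc h', mk b d hb hd h'']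
  · rw [mk a d ha hd h', mk b c hb hc h'', Set.pair_comm]
end

section
/- Let K ⊆ L be finite fields with [L : K] = 2, let H be a one-dimensional K-subspace of L, and let u ∈ L \ H. Then S = u + H is a Sidon set in the multiplicative group L^×. -/
/-- Bose: if `[L : K] = 2`, `H` is a `K`-line in `L` and `u ∉ H`, then
`u + H` is a Sidon set in `L^×`. -/
theorem bose_sidon {K L : Type*} [Field K] [Field L] [Fintype K] [Fintype L]
    [Algebra K L] (hdim : Module.finrank K L = 2)
    (H : Submodule K L) (hH : Module.finrank K H = 1)
    (u : L) (hu : u ∉ H) :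
    ∀ a ∈ {v : Lˣ | ∃ h ∈ H, (v : L) = u + h},
    ∀ b ∈ {v : Lˣ | ∃ h ∈ H, (v : L) = u + h},
    ∀ c ∈ {v : Lˣ | ∃ h ∈ H, (v : L) = u + h},
    ∀ d ∈ {v : Lˣ | ∃ h ∈ H, (v : L) = u + h},
      a * b = c * d → ({a, b} : Set Lˣ) = {c, d} := by
  -- get a generator θ of H
  obtain ⟨v, hv0, hvgen⟩ := (finrank_eq_one_iff' (K := K) (V := H)).mp hH
  set θ : L := (v : L) with hθdef
  have hθH : θ ∈ H := v.2
  have hθ0 : θ ≠ 0 := fun h => hv0 (Subtype.ext h)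
  have hspan : ∀ h ∈ H, ∃ t : K, h = t • θ := by
    intro h hh
    obtain ⟨c, hc⟩ := hvgen ⟨h, hh⟩
    exact ⟨c, by simpa [hθdef] using congrArg Subtype.val hc.symm⟩
  -- key independence lemma
  have key : ∀ s p : K, s • (u * θ) = p • (θ * θ) → s = 0 ∧ p = 0 := by
    intro s p hsp
    have h1 : (s • u - p • θ) * θ = 0 := by
      rw [sub_mul, smul_mul_assoc, smul_mul_assoc, hsp, sub_self]
    have h2 : s • u = p • θ := by
      rcases mul_eq_zero.mp h1 with h | h
      · exact sub_eq_zero.mp h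
      · exact absurd h hθ0
    have hs : s = 0 := by
      by_contra hs
      apply hu
      have : u = (s⁻¹ * p) • θ := by
        rw [mul_smul, ← h2, inv_smul_smul₀ hs]
      exact this ▸ H.smul_mem _ hθH
    refine ⟨hs, ?_⟩
    rw [hs, zero_smul] at h2
    exact (smul_eq_zero.mp h2.symm).resolve_right hθ0
  rintro a ⟨h₁, hh₁, ha⟩ b ⟨h₂, hh₂, hb⟩ c ⟨h₃, hh₃, hc⟩ d ⟨h₄, hh₄, hd⟩ hab
  obtain ⟨t₁, rfl⟩ := hspan h₁ hh₁
  obtain ⟨t₂, rfl⟩ := hspan h₂ hh₂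
  obtain ⟨t₃, rfl⟩ := hspan h₃ hh₃
  obtain ⟨t₄, rfl⟩ := hspan h₄ hh₄
  have hprod : (u + t₁ • θ) * (u + t₂ • θ) = (u + t₃ • θ) * (u + t₄ • θ) := by
    rw [← ha, ← hb, ← hc, ← hd, ← Units.val_mul, ← Units.val_mul, hab]
  have heq : (t₁ + t₂ - (t₃ + t₄)) • (u * θ) = (t₃ * t₄ - t₁ * t₂) • (θ * θ) := by
    simp only [Algebra.smul_def, map_sub, map_add, map_mul] at hprod ⊢
    ring_nf at hprod ⊢
    linear_combination hprod
  obtain ⟨hsum, hpr⟩ := key _ _ heq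
  have hsum' : t₁ + t₂ = t₃ + t₄ := sub_eq_zero.mp hsum
  have hpr' : t₁ * t₂ = t₃ * t₄ := (sub_eq_zero.mp hpr).symm
  have hcases : (t₁ - t₃) * (t₁ - t₄) = 0 := by ring_nf; linear_combination t₁ * hsum' - hpr'
  have coe_inj : ∀ x y : Lˣ, (x : L) = y → x = y := fun x y h => Units.ext h
  rcases mul_eq_zero.mp hcases with h | h
  · have e13 : t₁ = t₃ := sub_eq_zero.mp h
    have e24 : t₂ = t₄ := by
      have := hsum'; rw [e13] at this; exact add_left_cancel this
    have hac : a = c := coe_inj _ _ (by rw [ha, hc, e13])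
    have hbd : b = d := coe_inj _ _ (by rw [hb, hd, e24])
    rw [hac, hbd]
  · have e14 : t₁ = t₄ := sub_eq_zero.mp h
    have e23 : t₂ = t₃ := by
      have h' : t₂ + t₁ = t₃ + t₄ := by rw [add_comm]; exact hsum'
      rw [e14] at h'; exact add_right_cancel h'
    have had : a = d := coe_inj _ _ (by rw [ha, hd, e14])
    have hbc : b = c := coe_inj _ _ (by rw [hb, hc, e23])
    rw [had, hbc, Set.pair_comm]
end

section
/- Let K ⊆ L be finite fields with [L : K] = 3, and let H = {x ∈ L : tr_{L/K}(x) = 0}. Then the image of H ∩ L^× in the quotient group G = L^×/K^× is a Sidon set. -/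
open IntermediateField

/-- Singer: if `[L : K] = 3` and `H` is the trace-zero hyperplane, the image of
`H ∩ L^×` in `L^×/K^×` is a Sidon set. -/
theorem singer_sidon {K L : Type*} [Field K] [Field L] [Fintype K] [Fintype L]
    [Algebra K L] (hdim : Module.finrank K L = 3) :
    let KX : Subgroup Lˣ := (Units.map (algebraMap K L : K →* L)).range
    let S : Set (Lˣ ⧸ KX) :=
      QuotientGroup.mk '' {x : Lˣ | Algebra.trace K L (x : L) = 0}
    ∀ a ∈ S, ∀ b ∈ S, ∀ c ∈ S, ∀ d ∈ S,
      a * b = c * d → ({a, b} : Set (Lˣ ⧸ KX)) = {c, d} := by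
  intro KX S a ha b hb c hc d hd habcd
  obtain ⟨x, hx, rfl⟩ := ha
  obtain ⟨y, hy, rfl⟩ := hb
  obtain ⟨z, hz, rfl⟩ := hc
  obtain ⟨w, hw, rfl⟩ := hd
  simp only [Set.mem_setOf_eq] at hx hy hz hw
  -- helper: equality of classes from scalar relation
  have mkeq : ∀ (u v : Lˣ) (μ : K), μ ≠ 0 → (v : L) = algebraMap K L μ * u →
      (QuotientGroup.mk u : Lˣ ⧸ KX) = QuotientGroup.mk v := by
    intro u v μ hμ hv
    rw [QuotientGroup.eq]
    refine ⟨Units.mk0 μ hμ, Units.ext ?_⟩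
    have hu : (u : L) ≠ 0 := u.ne_zero
    simp only [Units.coe_map, Units.val_mul, Units.val_inv_eq_inv_val, MonoidHom.coe_coe,
      Units.val_mk0]
    field_simp [hv]
    exact hv.symm
  -- extract the scalar from the product relation
  have hmk : (QuotientGroup.mk (x * y) : Lˣ ⧸ KX) = QuotientGroup.mk (z * w) := by
    simpa using habcd
  rw [QuotientGroup.eq] at hmk
  obtain ⟨k, hk⟩ := hmk
  have hk' : (z : L) * w = (x : L) * y * algebraMap K L (k : K) := by
    have h0 := congrArg (fun u : Lˣ => (u : L)) hk
    simp only [Units.coe_map, Units.val_mul, Units.val_inv_eq_inv_val, MonoidHom.coe_coe] at h0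
    have hx0 : ((x : L) * y) ≠ 0 := mul_ne_zero x.ne_zero y.ne_zero
    field_simp at h0
    linear_combination -h0
  have hk0 : (algebraMap K L) (k : K) ≠ 0 := by
    simpa using (Units.map (algebraMap K L : K →* L) k).ne_zero
  set t : L := (x : L) * algebraMap K L (k : K) * (z : L)⁻¹ with ht
  have hz0 : (z : L) ≠ 0 := z.ne_zero
  have ht0 : t ≠ 0 := by
    apply mul_ne_zero (mul_ne_zero x.ne_zero hk0) (inv_ne_zero hz0)
  have h1 : t * z = (x : L) * algebraMap K L (k : K) := by
    rw [ht, inv_mul_cancel_right₀ hz0]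
  have h2 : t * y = (w : L) := by
    apply mul_right_cancel₀ hz0
    rw [ht]
    field_simp
    linear_combination -hk'
  by_cases hT : ∃ μ : K, algebraMap K L μ = t
  · -- t is a scalar: a = c, b = d
    obtain ⟨μ, hμ⟩ := hT
    have hμ0 : μ ≠ 0 := by rintro rfl; simp at hμ; exact ht0 hμ.symm
    have hac : (QuotientGroup.mk x : Lˣ ⧸ KX) = QuotientGroup.mk z := by
      refine mkeq x z ((k : K) * μ⁻¹) (by simp [hμ0, k.ne_zero]) ?_
      have : algebraMap K L μ * z = (x : L) * algebraMap K L (k : K) := by rw [hμ]; exact h1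
      rw [map_mul, map_inv₀]
      have hm : algebraMap K L μ ≠ 0 := by rw [hμ]; exact ht0
      rw [mul_comm (algebraMap K L (k:K)) ((algebraMap K L μ)⁻¹), mul_assoc,
        mul_comm (algebraMap K L (k:K)) (x:L), ← this, ← mul_assoc, inv_mul_cancel₀ hm, one_mul]
    have hbd : (QuotientGroup.mk y : Lˣ ⧸ KX) = QuotientGroup.mk w := by
      refine mkeq y w μ hμ0 ?_
      rw [hμ, h2]
    rw [hac, hbd]
  · by_cases hY : (y : L) ∈ Submodule.span K {(z : L)}
    · -- y is a multiple of z: a = d, b = c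
      obtain ⟨μ, hμ⟩ := Submodule.mem_span_singleton.mp hY
      have hμ0 : μ ≠ 0 := by rintro rfl; simp at hμ; exact y.ne_zero hμ.symm
      have hyz : (y : L) = algebraMap K L μ * z := by
        rw [← hμ, Algebra.smul_def]
      have hcb : (QuotientGroup.mk z : Lˣ ⧸ KX) = QuotientGroup.mk y := mkeq z y μ hμ0 hyz
      have had : (QuotientGroup.mk x : Lˣ ⧸ KX) = QuotientGroup.mk w := by
        refine mkeq x w (μ * k) (mul_ne_zero hμ0 k.ne_zero) ?_
        rw [← h2, hyz, map_mul]
        calc t * (algebraMap K L μ * z) = algebraMap K L μ * (t * z) := by ring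
          _ = algebraMap K L μ * ((x:L) * algebraMap K L (k:K)) := by rw [h1]
          _ = algebraMap K L μ * algebraMap K L (k : K) * x := by ring
      rw [had, ← hcb]
      exact Set.pair_comm _ _
    · -- contradiction: t would map the trace-zero plane to itself
      exfalso
      -- trace is surjective, kernel has dimension 2
      have htr := Algebra.trace_ne_zero K L
      obtain ⟨u, hu⟩ : ∃ u : L, Algebra.trace K L u ≠ 0 := by
        by_contra h
        push_neg at h
        exact htr (LinearMap.ext fun u => by simpa using h u)
      have hrange : LinearMap.range (Algebra.trace K L) = ⊤ := by
        rw [Submodule.eq_top_iff']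
        intro cc
        exact ⟨(cc * (Algebra.trace K L u)⁻¹) • u, by
          rw [map_smul, smul_eq_mul]; field_simp⟩
      have hker : Module.finrank K (LinearMap.ker (Algebra.trace K L : L →ₗ[K] K)) = 2 := by
        have h3 := LinearMap.finrank_range_add_finrank_ker (Algebra.trace K L : L →ₗ[K] K)
        rw [hrange, finrank_top, Module.finrank_self, hdim] at h3
        omega
      -- the span of y, z equals the kernel of the trace
      have hle : Submodule.span K {(y : L), (z : L)} ≤ LinearMap.ker (Algebra.trace K L) := by
        rw [Submodule.span_le]
        rintro v (rfl | rfl) <;> simpa [LinearMap.mem_ker]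
      have hlt : Submodule.span K {(z : L)} < Submodule.span K {(y : L), (z : L)} := by
        refine lt_of_le_of_ne (Submodule.span_mono (by simp)) fun h => hY ?_
        rw [h]
        exact Submodule.subset_span (by simp)
      have h2le : 2 ≤ Module.finrank K (Submodule.span K {(y : L), (z : L)}) := by
        have := Submodule.finrank_lt_finrank_of_lt hlt
        rw [finrank_span_singleton hz0] at this
        omega
      have hspan : Submodule.span K {(y : L), (z : L)} = LinearMap.ker (Algebra.trace K L) :=
        Submodule.eq_of_le_of_finrank_le hle (by rw [hker]; exact h2le)
      -- K⟮t⟯ = ⊤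
      have hint : IsIntegral K t := IsIntegral.of_finite K t
      have htop : (Algebra.adjoin K {t} : Subalgebra K L) = ⊤ := by
        have hdvd : Module.finrank K K⟮t⟯ ∣ 3 :=
          ⟨Module.finrank K⟮t⟯ L, by rw [← hdim, ← Module.finrank_mul_finrank K K⟮t⟯ L]⟩
        rcases (Nat.prime_three.eq_one_or_self_of_dvd _ hdvd) with h1' | h3'
        · exfalso
          have hbot : K⟮t⟯ = ⊥ := IntermediateField.finrank_eq_one_iff.mp h1'
          have : t ∈ (⊥ : IntermediateField K L) := hbot ▸ mem_adjoin_simple_self K t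
          rw [IntermediateField.mem_bot] at this
          exact hT this
        · rw [← adjoin_simple_toSubalgebra_of_isAlgebraic hint.isAlgebraic, ← Algebra.toSubmodule_eq_top]
          apply Submodule.eq_top_of_finrank_eq
          rw [hdim, Subalgebra.finrank_toSubmodule]
          exact h3'
      -- everything maps ker trace to itself
      have hmul : ∀ l : L, ∀ h : L, Algebra.trace K L h = 0 → Algebra.trace K L (l * h) = 0 := by
        intro l
        have hl : l ∈ Algebra.adjoin K {t} := htop ▸ Algebra.mem_top
        induction hl using Algebra.adjoin_induction with
        | mem v hv =>
          intro h hh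
          rcases hv with rfl
          have hh' : h ∈ Submodule.span K {(y : L), (z : L)} := by
            rw [hspan]; exact LinearMap.mem_ker.mpr hh
          obtain ⟨p, q, rfl⟩ := Submodule.mem_span_pair.mp hh'
          have hxk : Algebra.trace K L ((x : L) * algebraMap K L (k : K)) = 0 := by
            rw [mul_comm, ← Algebra.smul_def, map_smul, hx, smul_zero]
          rw [mul_add, mul_smul_comm, mul_smul_comm, h1, h2, map_add, map_smul, map_smul,
            hw, hxk, smul_zero, smul_zero, add_zero]
        | algebraMap r =>
          intro h hh
          rw [← Algebra.smul_def, map_smul, hh, smul_zero]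
        | add p q hp hq ihp ihq =>
          intro h hh
          rw [add_mul, map_add, ihp h hh, ihq h hh, add_zero]
        | mul p q hp hq ihp ihq =>
          intro h hh
          rw [mul_assoc]
          exact ihp _ (ihq h hh)
      -- hence the trace is zero everywhere: contradiction
      apply htr
      apply LinearMap.ext
      intro v
      have := hmul (v * (x : L)⁻¹) (x : L) hx
      rw [inv_mul_cancel_right₀ x.ne_zero] at this
      simpa using this
end

section
/- Let L be an incidence structure that is a partial linear space, and let G be an abelian group of automorphisms of L acting regularly on points and regularly on lines. Then for any point p and any line ℓ, the set S = {g ∈ G : p^g ∈ ℓ} is a Sidon set in G. -/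
/-- If `G` is an abelian group of automorphisms of a partial linear space acting
regularly on points and on lines, then any point-line stabilizer set is Sidon. -/
theorem stabilizer_sidon {G P L : Type*} [CommGroup G]
    (I : P → L → Prop)
    (hpls : ∀ p q : P, p ≠ q → ∀ l m : L, I p l → I q l → I p m → I q m → l = m)
    [MulAction G P] [MulAction G L]
    (hinc : ∀ (g : G) (p : P) (l : L), I p l ↔ I (g • p) (g • l))
    (hregP : ∀ p p' : P, ∃! g : G, g • p = p')
    (hregL : ∀ l l' : L, ∃! g : G, g • l = l')
    (p : P) (l : L) :
    ∀ x ∈ {g : G | I (g • p) l}, ∀ y ∈ {g : G | I (g • p) l},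
    ∀ z ∈ {g : G | I (g • p) l}, ∀ w ∈ {g : G | I (g • p) l},
      x * y = z * w → ({x, y} : Set G) = {z, w} := by
  intro x hx y hy z hz w hw hxyzw
  simp only [Set.mem_setOf_eq] at hx hy hz hw
  by_cases hxz : x = z
  · subst hxz
    have : y = w := by exact mul_left_cancel hxyzw
    subst this; rfl
  · -- then x • p ≠ z • p
    have hpts : x • p ≠ z • p := by
      intro h
      exact hxz ((hregP p (z • p)).unique h rfl)
    have hzw : x * w⁻¹ * y = z := by
      have : x * y = z * w := hxyzw
      rw [mul_comm x w⁻¹, mul_assoc, mul_comm w⁻¹ _, this, mul_inv_cancel_right]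
    have h1 : I (x • p) ((x * w⁻¹) • l) := by
      have := (hinc (x * w⁻¹) (w • p) l).mp hw
      rwa [smul_smul, inv_mul_cancel_right] at this
    have h2 : I (z • p) ((x * w⁻¹) • l) := by
      have := (hinc (x * w⁻¹) (y • p) l).mp hy
      rwa [smul_smul, hzw] at this
    have hl : l = (x * w⁻¹) • l := hpls _ _ hpts _ _ hx hz h1 h2
    have hxw : x * w⁻¹ = 1 := by
      have h1 : (x * w⁻¹) • l = l := hl.symm
      have h2 : (1 : G) • l = l := one_smul _ _
      exact (hregL l l).unique h1 h2
    have hxw' : x = w := by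
      rwa [mul_inv_eq_one] at hxw
    subst hxw'
    have : y = z := by
      have := hxyzw
      rw [mul_comm z x] at this
      exact mul_left_cancel this
    subst this
    exact Set.pair_comm x y
end

section
/- Let P be a finite projective plane of order q, G an abelian subgroup of Aut(P), p a point and ℓ a line with trivial stabilizers G_p = G_ℓ = 1. If d is the number of points of ℓ not in the orbit G·p, then S = {g ∈ G : p^g ∈ ℓ} is a Sidon set of size q+1−d in G, and d ≤ (q+1)·((q²+q+1)/|G| − 1). -/
/-- Sidon sets from projective planes with an abelian collineation group:
if `G_p = G_ℓ = 1` and `d` is the number of points of `ℓ` outside the orbit of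
`p`, then the point-line stabilizer is a Sidon set of size `q + 1 - d`, and
`d ≤ (q+1)((q²+q+1)/|G| - 1)`. -/
theorem projective_plane_sidon {G P L : Type*} [CommGroup G] [Fintype G]
    [Fintype P] [Fintype L] (q : ℕ)
    (I : P → L → Prop)
    -- projective plane of order q:
    (hP : Fintype.card P = q ^ 2 + q + 1)
    (hL : Fintype.card L = q ^ 2 + q + 1)
    (hpoints : ∀ p p' : P, p ≠ p' → ∃! l : L, I p l ∧ I p' l)
    (hlines : ∀ l l' : L, l ≠ l' → ∃! p : P, I p l ∧ I p l')
    (hlinecard : ∀ l : L, {p : P | I p l}.ncard = q + 1)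
    (hpointcard : ∀ p : P, {l : L | I p l}.ncard = q + 1)
    -- G acts by collineations:
    [MulAction G P] [MulAction G L]
    (hinc : ∀ (g : G) (p : P) (l : L), I p l ↔ I (g • p) (g • l))
    (p : P) (l : L)
    (hGp : ∀ g : G, g • p = p → g = 1)
    (hGl : ∀ g : G, g • l = l → g = 1)
    (d : ℕ)
    (hd : d = {x : P | I x l ∧ x ∉ MulAction.orbit G p}.ncard) :
    (∀ x ∈ {g : G | I (g • p) l}, ∀ y ∈ {g : G | I (g • p) l},
      ∀ z ∈ {g : G | I (g • p) l}, ∀ w ∈ {g : G | I (g • p) l},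
        x * y = z * w → ({x, y} : Set G) = {z, w}) ∧
    {g : G | I (g • p) l}.ncard = q + 1 - d ∧
    (d : ℚ) ≤ (q + 1) * ((q ^ 2 + q + 1 : ℚ) / (Fintype.card G) - 1) := by
  classical
  have hpinj : Function.Injective (fun g : G => g • p) := by
    intro a b hab
    have h1 : (b⁻¹ * a) • p = p := by
      rw [mul_smul]
      simp only at hab
      rw [hab, inv_smul_smul]
    have := hGp _ h1
    have : b * (b⁻¹ * a) = b * 1 := by rw [this]
    simpa [mul_assoc] using this
  have hlinj : Function.Injective (fun g : G => g • l) := by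
    intro a b hab
    have h1 : (b⁻¹ * a) • l = l := by
      rw [mul_smul]
      simp only at hab
      rw [hab, inv_smul_smul]
    have := hGl _ h1
    have : b * (b⁻¹ * a) = b * 1 := by rw [this]
    simpa [mul_assoc] using this
  refine ⟨?_, ?_, ?_⟩
  · -- Sidon
    intro x hx y hy z hz w hw hxyzw
    simp only [Set.mem_setOf_eq] at hx hy hz hw
    by_cases hyz : y • p = z • p
    · have hyz' : y = z := hpinj hyz
      have hxw : x = w := by
        have : z * x = z * w := by rw [← hxyzw, hyz', mul_comm]
        exact mul_left_cancel this
      rw [hyz', hxw, Set.pair_comm]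
    · set g := x * z⁻¹ with hgdef
      have hgz : g • (z • p) = x • p := by
        rw [← mul_smul, hgdef, inv_mul_cancel_right]
      have hgy : g • (y • p) = w • p := by
        rw [← mul_smul]
        congr 1
        have : x * z⁻¹ * y * z = w * z := by
          rw [mul_assoc, mul_comm y z, ← mul_assoc, inv_mul_cancel_right, hxyzw, mul_comm z w]
        exact mul_right_cancel this
      by_cases hxw : x • p = w • p
      · exfalso
        apply hyz
        have hxw' : x = w := hpinj hxw
        have : y = z := by
          have : x * y = x * z := by rw [hxyzw, hxw', mul_comm]
          exact mul_left_cancel this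
        rw [this]
      · have h1 : I (x • p) (g • l) := by
          have := (hinc g (z • p) l).mp hz
          rwa [hgz] at this
        have h2 : I (w • p) (g • l) := by
          have := (hinc g (y • p) l).mp hy
          rwa [hgy] at this
        obtain ⟨m, _, hmuniq⟩ := hpoints _ _ hxw
        have hgl : g • l = l := by
          rw [hmuniq _ ⟨h1, h2⟩, hmuniq _ ⟨hx, hw⟩]
        have hg1 : g = 1 := hGl g hgl
        have hxz : x = z := by
          have : x * z⁻¹ * z = 1 * z := by rw [← hgdef, hg1]
          simpa [inv_mul_cancel_right] using this
        have hyw : y = w := by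
          have : x * y = x * w := by rw [hxyzw, hxz]
          exact mul_left_cancel this
        rw [hxz, hyw]
  · -- cardinality
    have himg : (fun g : G => g • p) '' {g : G | I (g • p) l}
        = {x : P | I x l ∧ x ∈ MulAction.orbit G p} := by
      ext x
      constructor
      · rintro ⟨g, hg, rfl⟩
        exact ⟨hg, MulAction.mem_orbit _ _⟩
      · rintro ⟨hxl, hxo⟩
        obtain ⟨g, rfl⟩ := MulAction.mem_orbit_iff.mp hxo
        exact ⟨g, hxl, rfl⟩
    have hcardS : {g : G | I (g • p) l}.ncard
        = {x : P | I x l ∧ x ∈ MulAction.orbit G p}.ncard := by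
      rw [← himg, Set.ncard_image_of_injective _ hpinj]
    have hsplit : {x : P | I x l ∧ x ∈ MulAction.orbit G p}.ncard
        + {x : P | I x l ∧ x ∉ MulAction.orbit G p}.ncard = q + 1 := by
      rw [← Set.ncard_union_eq]
      · rw [← hlinecard l]
        congr 1
        ext x
        simp only [Set.mem_union, Set.mem_setOf_eq]
        tauto
      · rw [Set.disjoint_left]
        rintro a ⟨_, ha⟩ ⟨_, hb⟩
        exact hb ha
    rw [hcardS, ← hsplit, hd]
    omega
  · -- the inequality
    set N := q ^ 2 + q + 1 with hN
    set n := Fintype.card G with hn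
    have hn0 : 0 < n := Fintype.card_pos
    -- orbit of p has cardinality n
    have horb : (MulAction.orbit G p).ncard = n := by
      have : MulAction.orbit G p = (fun g : G => g • p) '' Set.univ := by
        rw [Set.image_univ]; rfl
      rw [this, Set.ncard_image_of_injective _ hpinj, Set.ncard_univ, Nat.card_eq_fintype_card]
    -- the Finset of points outside the orbit
    set T : Finset P := Finset.univ.filter (fun x : P => x ∉ MulAction.orbit G p) with hT
    have hTcard : T.card = N - n := by
      have h1 : (Finset.univ.filter (fun x : P => x ∈ MulAction.orbit G p)).card
          + T.card = Fintype.card P := by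
        rw [hT]
        exact Finset.card_filter_add_card_filter_not _
      have h2 : (Finset.univ.filter (fun x : P => x ∈ MulAction.orbit G p)).card = n := by
        rw [← horb, Set.ncard_eq_toFinset_card']
        congr 1
        ext x
        simp
      rw [hP] at h1
      omega
    have hnN : n ≤ N := by
      have h2 : (Finset.univ.filter (fun x : P => x ∈ MulAction.orbit G p)).card = n := by
        rw [← horb, Set.ncard_eq_toFinset_card']
        congr 1
        ext x
        simp
      calc n = _ := h2.symm
        _ ≤ Fintype.card P := Finset.card_filter_le _ _
        _ = N := hP
    -- each line g • l contains exactly d points of T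
    have hcount : ∀ g : G, (T.filter (fun x : P => I x (g • l))).card = d := by
      intro g
      have hdf : d = (Finset.univ.filter
          (fun x : P => I x l ∧ x ∉ MulAction.orbit G p)).card := by
        rw [hd, Set.ncard_eq_toFinset_card']
        congr 1
        ext x
        simp
      rw [hdf]
      apply Finset.card_bij (fun x _ => g⁻¹ • x)
      · intro a ha
        simp only [Finset.mem_filter, Finset.mem_univ, true_and, hT] at ha ⊢
        constructor
        · have := (hinc g (g⁻¹ • a) (g⁻¹ • (g • l))).mpr
          rw [smul_inv_smul, inv_smul_smul] at this
          exact this ha.2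
        · intro hmem
          obtain ⟨h, hh⟩ := MulAction.mem_orbit_iff.mp hmem
          exact ha.1 (MulAction.mem_orbit_iff.mpr ⟨g * h, by rw [mul_smul, hh, smul_inv_smul]⟩)
      · intro a _ b _ hab
        exact MulAction.injective g⁻¹ hab
      · intro b hb
        simp only [Finset.mem_filter, Finset.mem_univ, true_and, hT] at hb
        refine ⟨g • b, ?_, by rw [inv_smul_smul]⟩
        simp only [hT, Finset.mem_filter, Finset.mem_univ, true_and]
        constructor
        · intro hmem
          obtain ⟨h, hh⟩ := MulAction.mem_orbit_iff.mp hmem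
          exact hb.2 (MulAction.mem_orbit_iff.mpr ⟨g⁻¹ * h, by rw [mul_smul, hh, inv_smul_smul]⟩)
        · exact (hinc g b l).mp hb.1
    -- each point lies on at most q+1 lines of the form g • l
    have hbound : ∀ x : P, (Finset.univ.filter (fun g : G => I x (g • l))).card ≤ q + 1 := by
      intro x
      have : (Finset.univ.filter (fun g : G => I x (g • l))).card
          ≤ ({m : L | I x m}).toFinset.card := by
        apply Finset.card_le_card_of_injOn (fun g => g • l)
        · intro g hg
          simp only [Finset.mem_coe, Finset.mem_filter, Finset.mem_univ, true_and] at hg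
          simp [hg]
        · intro a _ b _ hab
          exact hlinj hab
      rw [← Set.ncard_eq_toFinset_card', hpointcard] at this
      exact this
    -- double counting
    have hdc : n * d ≤ (N - n) * (q + 1) := by
      have hsum : ∑ g : G, (T.filter (fun x : P => I x (g • l))).card = n * d := by
        rw [Finset.sum_congr rfl (fun g _ => hcount g)]
        simp [hn, mul_comm]
      have hswap : ∑ g : G, (T.filter (fun x : P => I x (g • l))).card
          = ∑ x ∈ T, (Finset.univ.filter (fun g : G => I x (g • l))).card := by
        simp only [Finset.card_filter]
        exact Finset.sum_comm' fun _ _ => Iff.rfl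
      have : ∑ x ∈ T, (Finset.univ.filter (fun g : G => I x (g • l))).card
          ≤ ∑ x ∈ T, (q + 1) := Finset.sum_le_sum (fun x _ => hbound x)
      rw [Finset.sum_const, smul_eq_mul, hTcard] at this
      omega
    -- conclude over ℚ
    have hn0' : (0 : ℚ) < n := by exact_mod_cast hn0
    have key : (d : ℚ) * n ≤ ((q : ℚ) + 1) * ((q : ℚ) ^ 2 + q + 1 - n) := by
      have h := Nat.cast_le (α := ℚ) |>.mpr hdc
      push_cast [Nat.cast_sub (show n ≤ q ^ 2 + q + 1 from hnN), hN] at h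
      nlinarith [h]
    have hrw : ((q : ℚ) + 1) * ((q ^ 2 + q + 1 : ℚ) / (n : ℚ) - 1)
        = ((q : ℚ) + 1) * ((q : ℚ) ^ 2 + q + 1 - n) / n := by
      field_simp
    rw [hrw, le_div_iff₀ hn0']
    linarith [key]
end

section
/- Let K be a finite field of odd characteristic and φ : K → K a planar function, i.e., for every h ≠ 0 the map x ↦ φ(x+h) − φ(x) is a bijection of K. Then the graph S = {(x, φ(x)) : x ∈ K} is a Sidon set in K², and moreover K² \ (S − S) = ({0} × K) \ {(0,0)}. -/
open Pointwise

/-- The graph of a planar function on a finite field of odd characteristic is a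
Sidon set in `K²`, and its difference set misses exactly the nonzero points of
the vertical axis. -/
theorem planar_graph_sidon {K : Type*} [Field K] [Fintype K]
    (hodd : Odd (ringChar K))
    (φ : K → K)
    (hφ : ∀ h : K, h ≠ 0 → Function.Bijective (fun x => φ (x + h) - φ x)) :
    (∀ a ∈ {s : K × K | ∃ x : K, s = (x, φ x)},
     ∀ b ∈ {s : K × K | ∃ x : K, s = (x, φ x)},
     ∀ c ∈ {s : K × K | ∃ x : K, s = (x, φ x)},
     ∀ d ∈ {s : K × K | ∃ x : K, s = (x, φ x)},
        a + b = c + d → ({a, b} : Set (K × K)) = {c, d}) ∧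
    (Set.univ : Set (K × K)) \
        ({s : K × K | ∃ x : K, s = (x, φ x)} - {s : K × K | ∃ x : K, s = (x, φ x)})
      = ({0} ×ˢ (Set.univ : Set K)) \ {(0, 0)} := by
  constructor
  · rintro a ⟨x, rfl⟩ b ⟨y, rfl⟩ c ⟨z, rfl⟩ d ⟨w, rfl⟩ hsum
    have h1 : x + y = z + w := congrArg Prod.fst hsum
    have h2 : φ x + φ y = φ z + φ w := congrArg Prod.snd hsum
    by_cases hxz : x = z
    · subst hxz
      have hyw : y = w := by linear_combination h1
      subst hyw; rfl
    · have hh : x - z ≠ 0 := sub_ne_zero.mpr hxz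
      have hw : w = y + (x - z) := by linear_combination -h1
      have key : (fun t => φ (t + (x - z)) - φ t) z = (fun t => φ (t + (x - z)) - φ t) y := by
        simp only
        rw [show z + (x - z) = x by ring, ← hw]
        linear_combination h2
      have hzy : z = y := (hφ _ hh).1 key
      subst hzy
      have hxw : x = w := by linear_combination h1
      subst hxw
      exact Set.pair_comm _ _
  · ext ⟨u, v⟩
    simp only [Set.mem_diff, Set.mem_univ, true_and, Set.mem_sub, Set.mem_setOf_eq,
      Set.mem_prod, Set.mem_singleton_iff, Prod.mk.injEq, Set.singleton_prod]
    constructor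
    · intro hmem
      by_cases hu : u = 0
      · subst hu
        constructor
        · simp
        · intro hv
          have hv0 : v = 0 := by
            rcases hv with ⟨h1, h2⟩; exact h2
          apply hmem
          refine ⟨(0, φ 0), ⟨0, rfl⟩, (0, φ 0), ⟨0, rfl⟩, ?_⟩
          simp [Prod.ext_iff, hv0]
      · exfalso
        apply hmem
        obtain ⟨y, hy⟩ := (hφ u hu).2 v
        refine ⟨(y + u, φ (y + u)), ⟨y + u, rfl⟩, (y, φ y), ⟨y, rfl⟩, ?_⟩
        simp only at hy
        simp [Prod.ext_iff, hy]
    · rintro ⟨⟨w, -, hw⟩, hne⟩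
      obtain ⟨hu, hv⟩ : (0 : K) = u ∧ w = v := Prod.mk.injEq .. ▸ hw
      rintro ⟨p, ⟨x, rfl⟩, q, ⟨y, rfl⟩, hpq⟩
      have hx : x - y = u := congrArg Prod.fst hpq
      have hvy : φ x - φ y = v := congrArg Prod.snd hpq
      have hxy : x = y := by rw [← hu] at hx; linear_combination hx
      subst hxy
      exact hne ⟨hu.symm, by linear_combination -hvy⟩
end

section
/- Let K = F_{3^d} with d odd, and let φ(x) = x^{10} + x^6 − x^2 (or x^{10} − x^6 − x^2). Then φ is a planar function on K, i.e., for each h ≠ 0 the map x ↦ φ(x+h) − φ(x) is a bijection. -/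
private lemma pow_mod_four (d : ℕ) (hd : Odd d) : 3 ^ d % 4 = 3 := by
  obtain ⟨k, rfl⟩ := hd
  have : (3:ℕ) ^ (2*k+1) = 9 ^ k * 3 := by
    rw [pow_succ, pow_mul]; norm_num
  rw [this, Nat.mul_mod, Nat.pow_mod]
  simp

private lemma neg_one_not_sq {K : Type*} [Field K] [Fintype K]
    (d : ℕ) (hd : Odd d) (hcard : Fintype.card K = 3 ^ d) :
    ¬ IsSquare (-1 : K) := by
  rw [FiniteField.isSquare_neg_one_iff]
  simp [hcard, pow_mod_four d hd]

private lemma sum_sq_zero {K : Type*} [Field K] [Fintype K]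
    (d : ℕ) (hd : Odd d) (hcard : Fintype.card K = 3 ^ d)
    {a b : K} (hab : a ^ 2 + b ^ 2 = 0) : a = 0 ∧ b = 0 := by
  have hns := neg_one_not_sq d hd hcard
  have hb : b = 0 := by
    by_contra hb
    exact hns ⟨a / b, by field_simp; linear_combination -hab⟩
  refine ⟨?_, hb⟩
  have : a ^ 2 = 0 := by rw [hb] at hab; simpa using hab
  exact pow_eq_zero_iff (by norm_num) |>.mp this

/-- Coulter–Matthews style example: over `F_{3^d}` with `d` odd,
`φ(x) = x^10 ± x^6 - x^2` is a planar function. -/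
theorem coulter_matthews_planar {K : Type*} [Field K] [Fintype K]
    (d : ℕ) (hd : Odd d) (hcard : Fintype.card K = 3 ^ d)
    (ε : K) (hε : ε = 1 ∨ ε = -1) :
    ∀ h : K, h ≠ 0 →
      Function.Bijective (fun x : K =>
        ((x + h) ^ 10 + ε * (x + h) ^ 6 - (x + h) ^ 2) - (x ^ 10 + ε * x ^ 6 - x ^ 2)) := by
  intro h hh
  have h3 : (3 : K) = 0 := by
    have hd0 : d ≠ 0 := by rintro rfl; simp at hd
    have hc : ((Fintype.card K : ℕ) : K) = 0 := FiniteField.cast_card_eq_zero K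
    rw [hcard] at hc
    push_cast at hc
    exact pow_eq_zero_iff hd0 |>.mp hc
  have hε2 : ε ^ 2 = 1 := by rcases hε with rfl | rfl <;> ring
  rw [Fintype.bijective_iff_injective_and_card]
  refine ⟨?_, rfl⟩
  intro x y hxy
  simp only at hxy
  have key : (x - y) * h *
      (((x - y) ^ 4 + h ^ 4) ^ 2 + ((x - y) ^ 2 * h ^ 2 + ε) ^ 2) = 0 := by
    linear_combination hxy - ((1)*y*h + (-2)*y*h^5*ε + (-3)*y*h^9 + (-5)*y^2*h^4*ε + (-15)*y^2*h^8 + (-6)*y^3*h^3*ε + (-40)*y^3*h^7 + (-5)*y^4*h^2*ε + (-70)*y^4*h^6 + (-2)*y^5*h*ε + (-83)*y^5*h^5 + (-70)*y^6*h^4 + (-40)*y^7*h^3 + (-15)*y^8*h^2 + (-3)*y^9*h + (-1)*x*h + (2)*x*h^5*ε + (3)*x*h^9 + (-2)*x*y^2*h^3*ε + (-5)*x*y^4*h^5 + (-3)*x*y^8*h + (5)*x^2*h^4*ε + (15)*x^2*h^8 + (2)*x^2*y*h^3*ε + (10)*x^2*y^3*h^5 + (12)*x^2*y^7*h + (6)*x^3*h^3*ε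 + (40)*x^3*h^7 + (-10)*x^3*y^2*h^5 + (-28)*x^3*y^6*h + (5)*x^4*h^2*ε + (70)*x^4*h^6 + (5)*x^4*y*h^5 + (42)*x^4*y^5*h + (2)*x^5*h*ε + (83)*x^5*h^5 + (-42)*x^5*y^4*h + (70)*x^6*h^4 + (28)*x^6*y^3*h + (40)*x^7*h^3 + (-12)*x^7*y^2*h + (15)*x^8*h^2 + (3)*x^8*y*h + (3)*x^9*h) * h3
      - ((1)*y*h + (-1)*x*h) * hε2
  rcases mul_eq_zero.mp key with hzh | hS
  · rcases mul_eq_zero.mp hzh with hz | hh' 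
    · exact sub_eq_zero.mp hz
    · exact absurd hh' hh
  · exfalso
    obtain ⟨ha, hb⟩ := sum_sq_zero d hd hcard hS
    apply neg_one_not_sq d hd hcard
    refine ⟨h ^ 4, ?_⟩
    have h8 : h ^ 8 = -1 := by
      linear_combination h ^ 4 * ha - ((x - y) ^ 2 * h ^ 2 - ε) * hb - hε2
    linear_combination -h8
end

section
/- Let K be a finite field with char K > 3 and U ⊆ K a subset having at most one solution to x + y = 0 in U (i.e., at most one pair u, −u ∈ U, counting u = 0). Then S = {(x, x³) : x ∈ U} is a Sidon set in K². Conversely, if S is Sidon then U has at most one such solution. -/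
/-- For `char K > 3`, the cubic graph `{(x, x³) : x ∈ U}` is a Sidon set in `K²`
if and only if `U` has at most one solution to `x + y = 0`. -/
theorem cubic_graph_sidon_iff {K : Type*} [Field K] [Fintype K]
    (hchar : 3 < ringChar K) (U : Set K) :
    (∀ a ∈ {s : K × K | ∃ x ∈ U, s = (x, x ^ 3)},
     ∀ b ∈ {s : K × K | ∃ x ∈ U, s = (x, x ^ 3)},
     ∀ c ∈ {s : K × K | ∃ x ∈ U, s = (x, x ^ 3)},
     ∀ d ∈ {s : K × K | ∃ x ∈ U, s = (x, x ^ 3)},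
        a + b = c + d → ({a, b} : Set (K × K)) = {c, d}) ↔
    (∀ x ∈ U, ∀ y ∈ U, x + y = 0 → ∀ x' ∈ U, ∀ y' ∈ U, x' + y' = 0 →
      ({x, y} : Set K) = {x', y'}) := by
  have h3 : (3 : K) ≠ 0 := by
    intro h
    have hd := (CharP.cast_eq_zero_iff K (ringChar K) 3).mp h
    have := Nat.le_of_dvd (by norm_num) hd
    omega
  constructor
  · intro hS x hx y hy hxy x' hx' y' hy' hxy'
    have key := hS (x, x ^ 3) ⟨x, hx, rfl⟩ (y, y ^ 3) ⟨y, hy, rfl⟩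
      (x', x' ^ 3) ⟨x', hx', rfl⟩ (y', y' ^ 3) ⟨y', hy', rfl⟩
    have hy0 : y = -x := by linear_combination hxy
    have hy0' : y' = -x' := by linear_combination hxy'
    have hsum : ((x, x ^ 3) : K × K) + (y, y ^ 3) = (x', x' ^ 3) + (y', y' ^ 3) := by
      subst hy0 hy0'
      simp [Prod.ext_iff]
      ring
    have := key hsum
    rcases Set.pair_eq_pair_iff.mp this with ⟨h1, h2⟩ | ⟨h1, h2⟩
    · simp only [Prod.ext_iff, Prod.mk.injEq] at h1 h2
      rw [h1.1, h2.1]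
    · simp only [Prod.ext_iff, Prod.mk.injEq] at h1 h2
      rw [h1.1, h2.1, Set.pair_comm]
  · intro hU a ha b hb c hc d hd hsum
    obtain ⟨x, hx, rfl⟩ := ha
    obtain ⟨y, hy, rfl⟩ := hb
    obtain ⟨z, hz, rfl⟩ := hc
    obtain ⟨w, hw, rfl⟩ := hd
    rw [Prod.ext_iff] at hsum
    obtain ⟨h1, h2⟩ := hsum
    simp only [Prod.fst_add, Prod.snd_add] at h1 h2
    by_cases hs : x + y = 0
    · have hzw : z + w = 0 := by rw [← h1]; exact hs
      have := hU x hx y hy hs z hz w hw hzw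
      rcases Set.pair_eq_pair_iff.mp this with ⟨e1, e2⟩ | ⟨e1, e2⟩
      · subst e1 e2; rfl
      · subst e1 e2; rw [Set.pair_comm]
    · -- nondegenerate: deduce xy = zw
      have hprod : x * y = z * w := by
        have h3s : 3 * (x + y) * (x * y - z * w) = 0 := by
          linear_combination ((x+y)^2 + (x+y)*(z+w) + (z+w)^2 - 3*z*w) * h1 - h2
        rcases mul_eq_zero.mp h3s with h' | h'
        · rcases mul_eq_zero.mp h' with h'' | h''
          · exact absurd h'' h3
          · exact absurd h'' hs
        · linear_combination h'
      -- x, y and z, w have same sum and product, so {x,y} = {z,w}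
      have hzx : (z - x) * (z - y) = 0 := by linear_combination -z * h1 + hprod
      rcases mul_eq_zero.mp hzx with h' | h'
      · have ez : z = x := by linear_combination h'
        have ew : w = y := by linear_combination -h1 - ez
        subst ez ew; rfl
      · have ez : z = y := by linear_combination h'
        have ew : w = x := by linear_combination -h1 - ez
        subst ez ew; rw [Set.pair_comm]
end

section
/- Let K be a field and A a commutative K-subalgebra of the matrix algebra M₃(K). Then dim_K A ≤ 3. -/
open Polynomial Module Submodule

namespace Schur3

variable {K : Type*} [Field K] {V : Type*} [AddCommGroup V] [Module K V]

/-- A vector on which evaluation is injective bounds the dimension. -/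
lemma eval_inj_bound [FiniteDimensional K V] (S : Submodule K (Module.End K V)) (v : V)
    (h : ∀ b ∈ S, b v = 0 → b = 0) : Module.finrank K S ≤ Module.finrank K V := by
  let ev : S →ₗ[K] V :=
    { toFun := fun b => (b : Module.End K V) v
      map_add' := fun a b => rfl
      map_smul' := fun c a => rfl }
  have hinj : Function.Injective ev := by
    rw [← LinearMap.ker_eq_bot, eq_bot_iff]
    intro b hb
    have : (b : Module.End K V) v = 0 := hb
    have hb0 : (b : S) = 0 := Subtype.ext (h b.1 b.2 this)
    simp [hb0]
  exact LinearMap.finrank_le_finrank_of_injective hinj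

lemma commute_aeval {A : Type*} [Ring A] [Algebra K A] {a c : A} (h : Commute a c)
    (p : K[X]) : Commute c (aeval a p) := by
  induction p using Polynomial.induction_on' with
  | add p q hp hq => simpa [map_add] using hp.add_right hq
  | monomial n r =>
      rw [aeval_monomial]
      exact ((Algebra.commute_algebraMap_left r c).symm.mul_right (h.symm.pow_right n))

/-- If `m` is irreducible, kills `a`, and `q` is a nonzero polynomial of smaller degree,
then `aeval a q` is injective. -/
lemma bezout_kill {a : Module.End K V} {m q : K[X]} (hm0 : aeval a m = 0)
    (hirr : Irreducible m) (hq : q ≠ 0) (hdeg : q.natDegree < m.natDegree)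
    {z : V} (hz : (aeval a q) z = 0) : z = 0 := by
  have hnd : ¬ m ∣ q := fun hdvd => absurd (Polynomial.natDegree_le_of_dvd hdvd hq)
    (by omega)
  obtain ⟨α, β, hab⟩ := (hirr.coprime_iff_not_dvd.mpr hnd)
  have := congrArg (aeval a) hab
  simp only [map_add, map_mul, map_one, hm0, mul_zero, zero_add] at this
  have := congrArg (fun f : Module.End K V => f z) this
  simpa [Module.End.mul_apply, hz] using this.symm

lemma span_singleton_eq {W : Submodule K V} [FiniteDimensional K W] (h1 : Module.finrank K W = 1)
    {x : V} (hx : x ∈ W) (hx0 : x ≠ 0) : (K ∙ x) = W := by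
  apply Submodule.eq_of_le_of_finrank_le ((span_le).mpr (by simpa using hx))
  rw [h1, finrank_span_singleton hx0]

lemma zero_on_top {b : Module.End K V} (h : (⊤ : Submodule K V) ≤ LinearMap.ker b) : b = 0 := by
  ext x; simpa using h (mem_top : x ∈ (⊤ : Submodule K V))

lemma exists_ne_zero_of_finrank_pos {W : Submodule K V} [FiniteDimensional K W]
    (h : 0 < Module.finrank K W) : ∃ x : V, x ∈ W ∧ x ≠ 0 := by
  have : Nontrivial W := nontrivial_of_finrank_pos h
  obtain ⟨x, hx⟩ := exists_ne (0 : W)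
  exact ⟨x.1, x.2, fun h0 => hx (Subtype.ext h0)⟩

lemma finrank_span_pair_ge_two [FiniteDimensional K V] {x y : V} (hx : x ≠ 0)
    (hy : y ∉ (K ∙ x)) : 2 ≤ Module.finrank K (span K {x, y}) := by
  have hlt : (K ∙ x) < span K {x, y} := by
    refine lt_of_le_of_ne (span_mono (by simp)) (fun he => ?_)
    exact hy (he ▸ subset_span (by simp))
  have := Submodule.finrank_lt_finrank_of_lt hlt
  rw [finrank_span_singleton hx] at this
  omega

/-- The split case: `V = V₁ ⊕ V₂` with `dim V₁ = 1`, `dim V₂ = 2`, both invariant. -/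
lemma split_bound [FiniteDimensional K V] (hV : Module.finrank K V = 3)
    (S : Subalgebra K (Module.End K V))
    (hcomm : ∀ a ∈ S, ∀ b ∈ S, a * b = b * a)
    (V₁ V₂ : Submodule K V) (h1 : Module.finrank K V₁ = 1) (h2 : Module.finrank K V₂ = 2)
    (hdis : V₁ ⊓ V₂ = ⊥) (hsup : V₁ ⊔ V₂ = ⊤)
    (hinv1 : ∀ c ∈ S, ∀ x ∈ V₁, c x ∈ V₁) (hinv2 : ∀ c ∈ S, ∀ x ∈ V₂, c x ∈ V₂) :
    Module.finrank K S ≤ 3 := by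
  obtain ⟨v₁, hv₁W, hv₁0⟩ := exists_ne_zero_of_finrank_pos (W := V₁) (by omega)
  have hV₁span : (K ∙ v₁) = V₁ := span_singleton_eq h1 hv₁W hv₁0
  have main : ∀ x : V, x ∈ V₂ →
      (∀ c ∈ S, c v₁ = 0 → c x = 0 → V₂ ≤ LinearMap.ker c) →
      Module.finrank K S ≤ 3 := by
    intro x hxV hker
    rw [← Subalgebra.finrank_toSubmodule, ← hV]
    apply eval_inj_bound S.toSubmodule (v₁ + x)
    intro c hc hcv
    have hc1 : c v₁ ∈ V₁ := hinv1 c hc v₁ hv₁W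
    have hadd : c v₁ + c x = 0 := by rw [← map_add]; exact hcv
    have h1' : c v₁ ∈ V₁ ⊓ V₂ := ⟨hc1, by
      have h' : c v₁ = -(c x) := eq_neg_of_add_eq_zero_left hadd
      rw [h']; exact V₂.neg_mem (hinv2 c hc x hxV)⟩
    rw [hdis] at h1'
    have hcv₁ : c v₁ = 0 := h1'
    have hcx : c x = 0 := by rwa [hcv₁, zero_add] at hadd
    apply zero_on_top
    rw [← hsup, sup_le_iff]
    refine ⟨?_, hker c hc hcv₁ hcx⟩
    rw [← hV₁span, span_le]
    simpa using hcv₁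
  by_cases hb : ∃ b ∈ S, ∃ x ∈ V₂, b x ∉ (K ∙ x)
  · obtain ⟨b, hbS, x, hxV, hbx⟩ := hb
    have hx0 : x ≠ 0 := by rintro rfl; exact hbx (by simp)
    apply main x hxV
    intro c hc hcv₁ hcx
    have hbxV : b x ∈ V₂ := hinv2 b hbS x hxV
    have hsp : span K {x, b x} = V₂ := by
      apply Submodule.eq_of_le_of_finrank_le
      · rw [span_le]; rintro y (rfl | rfl); exacts [hxV, hbxV]
      · rw [h2]; exact finrank_span_pair_ge_two hx0 hbx
    rw [← hsp, span_le]
    rintro y (rfl | rfl)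
    · exact hcx
    · show c (b x) = 0
      have : c * b = b * c := hcomm c hc b hbS
      calc c (b x) = (c * b) x := rfl
        _ = b (c x) := by rw [this]; rfl
        _ = 0 := by rw [hcx, map_zero]
  · push_neg at hb
    obtain ⟨v₂, hv₂W, hv₂0⟩ := exists_ne_zero_of_finrank_pos (W := V₂) (by omega)
    apply main v₂ hv₂W
    intro c hc hcv₁ hcv₂
    intro y hyV₂
    show c y = 0
    by_cases hyspan : y ∈ (K ∙ v₂)
    · obtain ⟨d, rfl⟩ := mem_span_singleton.mp hyspan
      rw [map_smul, hcv₂, smul_zero]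
    · obtain ⟨α, hα⟩ := mem_span_singleton.mp (hb c hc y hyV₂)
      have hyv : y + v₂ ∈ V₂ := V₂.add_mem hyV₂ hv₂W
      obtain ⟨β, hβ⟩ := mem_span_singleton.mp (hb c hc (y + v₂) hyv)
      have hcy : c (y + v₂) = c y := by rw [map_add, hcv₂, add_zero]
      rw [hcy] at hβ
      by_cases hβ0 : β = 0
      · rw [← hβ, hβ0, zero_smul]
      · exfalso
        have : (α - β) • y = β • v₂ := by
          rw [sub_smul, smul_add] at *
          rw [← hα] at hβ
          linear_combination (norm := module) -hβ
        have hv₂y : v₂ = (β⁻¹ * (α - β)) • y := by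
          rw [mul_smul, this, ← mul_smul, inv_mul_cancel₀ hβ0, one_smul]
        have he0 : (β⁻¹ * (α - β)) ≠ 0 := fun h0 => hv₂0 (by rw [hv₂y, h0, zero_smul])
        apply hyspan
        rw [mem_span_singleton]
        exact ⟨(β⁻¹ * (α - β))⁻¹, by rw [hv₂y, ← mul_smul, inv_mul_cancel₀ he0, one_smul]⟩

/-- Rank-one representation of a nonzero square-zero endomorphism of a 3-dim space. -/
lemma sq_zero_rep [FiniteDimensional K V] (hV : Module.finrank K V = 3)
    {n : Module.End K V} (hsq : n * n = 0) (hn : n ≠ 0) :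
    ∃ (u : V) (w : V →ₗ[K] K), u ≠ 0 ∧ w ≠ 0 ∧ n = w.smulRight u ∧ w u = 0 := by
  have hrk : LinearMap.range n ≤ LinearMap.ker n := by
    rintro _ ⟨x, rfl⟩
    have : (n * n) x = 0 := by rw [hsq]; rfl
    simpa [Module.End.mul_apply] using this
  have hrn : Module.finrank K (LinearMap.range n) + Module.finrank K (LinearMap.ker n) = 3 := by
    rw [LinearMap.finrank_range_add_finrank_ker, hV]
  have hmono : Module.finrank K (LinearMap.range n) ≤ Module.finrank K (LinearMap.ker n) :=
    Submodule.finrank_mono hrk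
  have hpos : LinearMap.range n ≠ ⊥ := by
    rw [Ne, LinearMap.range_eq_bot]; exact hn
  have hpos' : 0 < Module.finrank K (LinearMap.range n) := by
    rcases Nat.eq_zero_or_pos (Module.finrank K (LinearMap.range n)) with h | h
    · exact absurd (Submodule.finrank_eq_zero.mp h) hpos
    · exact h
  have hr1 : Module.finrank K (LinearMap.range n) = 1 := by omega
  obtain ⟨u', hu'0, hu'span⟩ := finrank_eq_one_iff'.mp hr1
  set u : V := (u' : V) with hu_def
  have hu0 : u ≠ 0 := fun h => hu'0 (Subtype.ext h)
  have huR : u ∈ LinearMap.range n := u'.2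
  have hspan : (K ∙ u) = LinearMap.range n := span_singleton_eq hr1 huR hu0
  let e := LinearEquiv.toSpanNonzeroSingleton K V u hu0
  let w : V →ₗ[K] K := e.symm.toLinearMap ∘ₗ
    (LinearEquiv.ofEq _ _ hspan.symm).toLinearMap ∘ₗ n.rangeRestrict
  have hw_app : ∀ x, n x = w x • u := by
    intro x
    have h1 : (e (w x) : V) = w x • u := rfl
    have h2 : e (w x) = (LinearEquiv.ofEq _ _ hspan.symm) (n.rangeRestrict x) := by
      simp only [w, LinearMap.coe_comp, Function.comp_apply, LinearEquiv.coe_coe]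
      exact e.apply_symm_apply _
    have h3 : ((LinearEquiv.ofEq _ _ hspan.symm) (n.rangeRestrict x) : V) = n x := rfl
    rw [← h3, ← h2, h1]
  have heq : n = w.smulRight u := by
    ext x; rw [LinearMap.smulRight_apply]; exact hw_app x
  have hw0 : w ≠ 0 := by
    intro h
    apply hn
    rw [heq, h]
    ext x; simp
  have hwu : w u = 0 := by
    have : n u = 0 := hrk huR
    rw [hw_app u] at this
    exact (smul_eq_zero.mp this).resolve_right hu0
  exact ⟨u, w, hu0, hw0, heq, hwu⟩

lemma functional_scalar {w w' : V →ₗ[K] K} (hw : w ≠ 0)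
    (h : ∀ x, w x = 0 → w' x = 0) : ∃ c : K, w' = c • w := by
  obtain ⟨x₀, hx₀⟩ : ∃ x₀, w x₀ ≠ 0 := by
    by_contra hall; push_neg at hall
    exact hw (by ext x; simpa using hall x)
  set x₁ := (w x₀)⁻¹ • x₀ with hx₁def
  have hwx₁ : w x₁ = 1 := by
    rw [hx₁def, map_smul, smul_eq_mul, inv_mul_cancel₀ hx₀]
  refine ⟨w' x₁, ?_⟩
  ext x
  have hker : w (x - w x • x₁) = 0 := by
    rw [map_sub, map_smul, hwx₁, smul_eq_mul, mul_one, sub_self]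
  have := h _ hker
  rw [map_sub, map_smul, sub_eq_zero] at this
  rw [this]
  simp [mul_comm]

lemma pair_rep [FiniteDimensional K V] (hV : Module.finrank K V = 3)
    {u₁ u₂ : V} {w₁ w₂ : V →ₗ[K] K} (hu₁ : u₁ ≠ 0) (hu₂ : u₂ ≠ 0) (hw₁ : w₁ ≠ 0)
    (hw₂ : w₂ ≠ 0)
    (hsum : (w₁.smulRight u₁ + w₂.smulRight u₂) * (w₁.smulRight u₁ + w₂.smulRight u₂) = 0) :
    (∃ c : K, u₂ = c • u₁) ∨ (∃ c : K, w₂ = c • w₁) := by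
  by_cases hu : ∃ c : K, u₂ = c • u₁
  · exact Or.inl hu
  by_cases hw : ∃ c : K, w₂ = c • w₁
  · exact Or.inr hw
  exfalso
  -- find x with w₂ x = 0, w₁ x ≠ 0
  have key : ∀ (a b : V →ₗ[K] K), a ≠ 0 → b ≠ 0 → (¬ ∃ c : K, b = c • a) →
      ∃ x, b x = 0 ∧ a x ≠ 0 := by
    intro a b ha hb hab
    by_contra hall; push_neg at hall
    obtain ⟨c, hc⟩ := functional_scalar hb hall
    have hc0 : c ≠ 0 := by rintro rfl; rw [zero_smul] at hc; exact ha hc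
    exact hab ⟨c⁻¹, by rw [hc, ← mul_smul, inv_mul_cancel₀ hc0, one_smul]⟩
  obtain ⟨x, hx2, hx1⟩ := key w₁ w₂ hw₁ hw₂ hw
  obtain ⟨y, hy1, hy2⟩ := key w₂ w₁ hw₂ hw₁ (by
    rintro ⟨c, hc⟩
    have hc0 : c ≠ 0 := by rintro rfl; rw [zero_smul] at hc; exact hw₁ hc
    exact hw ⟨c⁻¹, by rw [hc, ← mul_smul, inv_mul_cancel₀ hc0, one_smul]⟩)
  set s := w₁.smulRight u₁ + w₂.smulRight u₂ with hs_def
  have hsx : s x = w₁ x • u₁ := by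
    simp [hs_def, LinearMap.smulRight_apply, hx2]
  have hsy : s y = w₂ y • u₂ := by
    simp [hs_def, LinearMap.smulRight_apply, hy1]
  by_cases hs0 : s = 0
  · rw [hs0] at hsx
    have : w₁ x • u₁ = 0 := by rw [← hsx]; rfl
    rcases smul_eq_zero.mp this with h | h
    exacts [hx1 h, hu₁ h]
  · obtain ⟨u', w', hu', hw', heq', _⟩ := sq_zero_rep hV hsum hs0
    have h1 : w₁ x • u₁ = w' x • u' := by rw [← hsx, heq', LinearMap.smulRight_apply]
    have h2 : w₂ y • u₂ = w' y • u' := by rw [← hsy, heq', LinearMap.smulRight_apply]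
    have hwx : w' x ≠ 0 := by
      rintro h; rw [h, zero_smul] at h1
      rcases smul_eq_zero.mp h1 with h | h
      exacts [hx1 h, hu₁ h]
    have hwy : w' y ≠ 0 := by
      rintro h; rw [h, zero_smul] at h2
      rcases smul_eq_zero.mp h2 with h | h
      exacts [hy2 h, hu₂ h]
    apply hu
    have hu1' : u₁ = ((w₁ x)⁻¹ * w' x) • u' := by
      rw [mul_smul, ← h1, ← mul_smul, inv_mul_cancel₀ hx1, one_smul]
    have hu2' : u₂ = ((w₂ y)⁻¹ * w' y) • u' := by
      rw [mul_smul, ← h2, ← mul_smul, inv_mul_cancel₀ hy2, one_smul]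
    have hc1 : ((w₁ x)⁻¹ * w' x) ≠ 0 := mul_ne_zero (inv_ne_zero hx1) hwx
    refine ⟨((w₂ y)⁻¹ * w' y) * ((w₁ x)⁻¹ * w' x)⁻¹, ?_⟩
    rw [hu2', hu1', ← mul_smul, mul_assoc, inv_mul_cancel₀ hc1, mul_one]

lemma three_indep_finrank_two {M : Type*} [AddCommGroup M] [Module K M]
    [FiniteDimensional K M] {p : Submodule K M} (hp : Module.finrank K p ≤ 2)
    {f : Fin 3 → M} (hmem : ∀ i, f i ∈ p) (hind : LinearIndependent K f) : False := by
  have h1 : LinearIndependent K (fun i => (⟨f i, hmem i⟩ : p)) := by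
    apply LinearIndependent.of_comp p.subtype
    exact hind
  have := h1.fintype_card_le_finrank
  simp only [Fintype.card_fin] at this
  omega

lemma finrank_ker_functional [FiniteDimensional K V] (hV : Module.finrank K V = 3)
    {w : V →ₗ[K] K} (hw : w ≠ 0) : Module.finrank K (LinearMap.ker w) = 2 := by
  have hrn : Module.finrank K (LinearMap.range w) + Module.finrank K (LinearMap.ker w) = 3 := by
    rw [LinearMap.finrank_range_add_finrank_ker, hV]
  have h1 : Module.finrank K (LinearMap.range w) ≤ 1 := by
    have := Submodule.finrank_le (LinearMap.range w)
    simpa using this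
  have hane : LinearMap.range w ≠ ⊥ := by rw [Ne, LinearMap.range_eq_bot]; exact hw
  have h0 : 0 < Module.finrank K (LinearMap.range w) :=
    Nat.pos_of_ne_zero (fun h => hane (Submodule.finrank_eq_zero.mp h))
  omega

/-- A subspace of pairwise "additively closed" square-zero endomorphisms of a
3-dimensional space has dimension at most 2. -/
lemma sqzero_dim_le [FiniteDimensional K V] (hV : Module.finrank K V = 3)
    (N : Submodule K (Module.End K V)) (hsq : ∀ n ∈ N, n * n = 0) :
    Module.finrank K N ≤ 2 := by
  by_contra hcon
  push_neg at hcon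
  obtain ⟨f, hf⟩ := exists_linearIndependent_of_le_finrank (R := K) (M := N) (n := 3) hcon
  set g : Fin 3 → Module.End K V := fun i => (f i : Module.End K V) with hg_def
  have hgind : LinearIndependent K g := hf.map' N.subtype N.ker_subtype
  have hgN : ∀ i, g i ∈ N := fun i => (f i).2
  have hg0 : ∀ i, g i ≠ 0 := fun i => hgind.ne_zero i
  have hrep := fun i => sq_zero_rep hV (hsq _ (hgN i)) (hg0 i)
  choose u w hu hw heq hwu using hrep
  have hpair : ∀ i j, i ≠ j → (∃ c : K, u j = c • u i) ∨ (∃ c : K, w j = c • w i) := by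
    intro i j hij
    have hmem : g i + g j ∈ N := N.add_mem (hgN i) (hgN j)
    have hs := hsq _ hmem
    rw [heq i, heq j] at hs
    exact pair_rep hV (hu i) (hu j) (hw i) (hw j) hs
  -- nonzero scalars in such relations
  have hcu : ∀ i j (c : K), u j = c • u i → c ≠ 0 := by
    rintro i j c hc rfl; rw [zero_smul] at hc; exact hu j hc
  have hcw : ∀ i j (c : K), w j = c • w i → c ≠ 0 := by
    rintro i j c hc rfl; rw [zero_smul] at hc; exact hw j hc
  -- the two terminal cases
  have ucase : ∀ (c₁ c₂ : K), c₁ ≠ 0 → c₂ ≠ 0 → u 1 = c₁ • u 0 → u 2 = c₂ • u 0 → False := by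
    intro c₁ c₂ hc₁ hc₂ h₁ h₂
    set cc : Fin 3 → K := ![1, c₁, c₂] with hcc
    have hcc0 : ∀ i, cc i ≠ 0 := by
      intro i; fin_cases i <;> simp [hcc, hc₁, hc₂]
    have hui : ∀ i, u i = cc i • u 0 := by
      intro i; fin_cases i <;> simp [hcc, h₁, h₂]
    set ω : Fin 3 → (V →ₗ[K] K) := fun i => cc i • w i with hω
    have hgω : ∀ i, g i = (ω i).smulRight (u 0) := by
      intro i
      rw [heq i, hui i]
      ext x
      simp [hω, LinearMap.smulRight_apply, smul_smul, mul_comm]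
    have hωu : ∀ i, (ω i) (u 0) = 0 := by
      intro i
      have h0 : (w i) (u i) = 0 := hwu i
      rw [hui i, map_smul, smul_eq_mul] at h0
      have : w i (u 0) = 0 := by
        rcases mul_eq_zero.mp h0 with h | h
        · exact absurd h (hcc0 i)
        · exact h
      simp [hω, this]
    -- ω is linearly independent
    have hT : ∀ (d : Fin 3 → K), (∑ i, d i • ω i) = 0 → (∑ i, d i • g i) = 0 := by
      intro d hd
      have : (∑ i, d i • g i) = (∑ i, d i • ω i).smulRight (u 0) := by
        ext x
        simp only [LinearMap.smulRight_apply, LinearMap.sum_apply, LinearMap.smul_apply]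
        rw [Finset.sum_smul]
        congr 1
        funext i
        rw [hgω i]
        simp [LinearMap.smulRight_apply, smul_smul]
      rw [this, hd]
      ext x; simp
    have hωind : LinearIndependent K ω := by
      rw [Fintype.linearIndependent_iff] at hgind ⊢
      intro d hd
      exact hgind d (hT d hd)
    -- but all ω i lie in the 2-dimensional kernel of evaluation at u 0
    have hE : ∃ φ : Module.Dual K V, φ (u 0) ≠ 0 := by
      by_contra hallE; push_neg at hallE
      exact hu 0 ((Module.forall_dual_apply_eq_zero_iff K (u 0)).mp hallE)
    obtain ⟨φ₀, hφ₀⟩ := hE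
    set E : Module.Dual K V →ₗ[K] K := (Module.Dual.eval K V) (u 0) with hE_def
    have hEne : E ≠ 0 := by
      intro h
      apply hφ₀
      have := congrArg (fun ψ => ψ φ₀) h
      simpa [hE_def] using this
    have hkerE : Module.finrank K (LinearMap.ker E) = 2 := by
      have hdual : Module.finrank K (Module.Dual K V) = 3 := by
        rw [Subspace.dual_finrank_eq, hV]
      have hrn : Module.finrank K (LinearMap.range E) +
          Module.finrank K (LinearMap.ker E) = 3 := by
        rw [LinearMap.finrank_range_add_finrank_ker, hdual]
      have h1 : Module.finrank K (LinearMap.range E) ≤ 1 := by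
        have := Submodule.finrank_le (LinearMap.range E)
        simpa using this
      have hane : LinearMap.range E ≠ ⊥ := by rw [Ne, LinearMap.range_eq_bot]; exact hEne
      have h0 : 0 < Module.finrank K (LinearMap.range E) :=
        Nat.pos_of_ne_zero (fun h => hane (Submodule.finrank_eq_zero.mp h))
      omega
    exact three_indep_finrank_two (le_of_eq hkerE)
      (fun i => by simpa [hE_def] using hωu i) hωind
  have wcase : ∀ (c₁ c₂ : K), c₁ ≠ 0 → c₂ ≠ 0 → w 1 = c₁ • w 0 → w 2 = c₂ • w 0 → False := by
    intro c₁ c₂ hc₁ hc₂ h₁ h₂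
    set cc : Fin 3 → K := ![1, c₁, c₂] with hcc
    have hcc0 : ∀ i, cc i ≠ 0 := by
      intro i; fin_cases i <;> simp [hcc, hc₁, hc₂]
    have hwi : ∀ i, w i = cc i • w 0 := by
      intro i; fin_cases i <;> simp [hcc, h₁, h₂]
    set υ : Fin 3 → V := fun i => cc i • u i with hυ
    have hgυ : ∀ i, g i = (w 0).smulRight (υ i) := by
      intro i
      rw [heq i, hwi i]
      ext x
      simp [hυ, LinearMap.smulRight_apply, smul_smul, mul_comm]
    have hυker : ∀ i, (w 0) (υ i) = 0 := by
      intro i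
      have h0 : (w i) (u i) = 0 := hwu i
      rw [hwi i] at h0
      simp only [LinearMap.smul_apply, smul_eq_mul] at h0
      have : w 0 (u i) = 0 := by
        rcases mul_eq_zero.mp h0 with h | h
        · exact absurd h (hcc0 i)
        · exact h
      simp [hυ, this]
    have hT : ∀ (d : Fin 3 → K), (∑ i, d i • υ i) = 0 → (∑ i, d i • g i) = 0 := by
      intro d hd
      have : (∑ i, d i • g i) = (w 0).smulRight (∑ i, d i • υ i) := by
        ext x
        simp only [LinearMap.smulRight_apply, LinearMap.sum_apply, LinearMap.smul_apply]
        rw [Finset.smul_sum]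
        congr 1
        funext i
        rw [hgυ i]
        simp [LinearMap.smulRight_apply, smul_smul, mul_comm]
      rw [this, hd]
      ext x; simp
    have hυind : LinearIndependent K υ := by
      rw [Fintype.linearIndependent_iff] at hgind ⊢
      intro d hd
      exact hgind d (hT d hd)
    exact three_indep_finrank_two (le_of_eq (finrank_ker_functional hV (hw 0)))
      hυker hυind
  -- combinatorics over the three pairs
  rcases hpair 0 1 (by decide) with ⟨c₁, hc₁⟩ | ⟨c₁, hc₁⟩
  · rcases hpair 0 2 (by decide) with ⟨c₂, hc₂⟩ | ⟨c₂, hc₂⟩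
    · exact ucase c₁ c₂ (hcu _ _ _ hc₁) (hcu _ _ _ hc₂) hc₁ hc₂
    · rcases hpair 1 2 (by decide) with ⟨c₃, hc₃⟩ | ⟨c₃, hc₃⟩
      · have h2 : u 2 = (c₃ * c₁) • u 0 := by rw [hc₃, hc₁, mul_smul]
        exact ucase c₁ (c₃ * c₁) (hcu _ _ _ hc₁)
          (mul_ne_zero (hcu _ _ _ hc₃) (hcu _ _ _ hc₁)) hc₁ h2
      · have hc₃0 := hcw _ _ _ hc₃
        have h1 : w 1 = (c₃⁻¹ * c₂) • w 0 := by
          rw [mul_smul, ← hc₂, hc₃, ← mul_smul, inv_mul_cancel₀ hc₃0, one_smul]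
        exact wcase (c₃⁻¹ * c₂) c₂ (mul_ne_zero (inv_ne_zero hc₃0) (hcw _ _ _ hc₂)) (hcw _ _ _ hc₂) h1 hc₂
  · rcases hpair 0 2 (by decide) with ⟨c₂, hc₂⟩ | ⟨c₂, hc₂⟩
    · rcases hpair 1 2 (by decide) with ⟨c₃, hc₃⟩ | ⟨c₃, hc₃⟩
      · have hc₃0 := hcu _ _ _ hc₃
        have h1 : u 1 = (c₃⁻¹ * c₂) • u 0 := by
          rw [mul_smul, ← hc₂, hc₃, ← mul_smul, inv_mul_cancel₀ hc₃0, one_smul]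
        exact ucase (c₃⁻¹ * c₂) c₂ (mul_ne_zero (inv_ne_zero hc₃0) (hcu _ _ _ hc₂)) (hcu _ _ _ hc₂) h1 hc₂
      · have h2 : w 2 = (c₃ * c₁) • w 0 := by rw [hc₃, hc₁, mul_smul]
        exact wcase c₁ (c₃ * c₁) (hcw _ _ _ hc₁)
          (mul_ne_zero (hcw _ _ _ hc₃) (hcw _ _ _ hc₁)) hc₁ h2
    · exact wcase c₁ c₂ (hcw _ _ _ hc₁) (hcw _ _ _ hc₂) hc₁ hc₂

lemma all_quadratic_bound [FiniteDimensional K V] (hV : Module.finrank K V = 3)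
    (S : Subalgebra K (Module.End K V))
    (hcomm : ∀ a ∈ S, ∀ b ∈ S, a * b = b * a)
    (hP : ∀ a ∈ S, ∃ lam : K, (a - lam • 1) * (a - lam • 1) = 0) :
    Module.finrank K S ≤ 3 := by
  have hVnt : Nontrivial V := by
    apply Module.nontrivial_of_finrank_pos (R := K); omega
  have hone : (1 : Module.End K V) ≠ 0 := by
    obtain ⟨v, hv⟩ := exists_ne (0 : V)
    intro h
    apply hv
    have := congrArg (fun f : Module.End K V => f v) h
    simpa using this
  set N : Submodule K (Module.End K V) :=
    { carrier := {n | n ∈ S ∧ n * n = 0}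
      zero_mem' := ⟨S.zero_mem, by simp⟩
      add_mem' := by
        rintro a b ⟨haS, ha⟩ ⟨hbS, hb⟩
        refine ⟨S.add_mem haS hbS, ?_⟩
        have hab : a * b = b * a := hcomm a haS b hbS
        have l1 : a*a*b = 0 := by rw [ha, zero_mul]
        have l3 : a*b*b = 0 := by rw [mul_assoc, hb, mul_zero]
        have l2 : a*b*a = 0 := by rw [mul_assoc, ← hab, ← mul_assoc, l1]
        have l4 : b*a*a = 0 := by rw [← hab, l2]
        have l5 : b*a*b = 0 := by rw [← hab, l3]
        have l6 : b*b*a = 0 := by rw [hb, zero_mul]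
        have hcube : (a+b)*((a+b)*(a+b)) = 0 := by
          have expand : (a+b)*((a+b)*(a+b)) =
              a*a*a + a*a*b + a*b*a + a*b*b + b*a*a + b*a*b + b*b*a + b*b*b := by
            noncomm_ring
          rw [expand, l1, l2, l3, l4, l5, l6, ha, hb]
          simp
        obtain ⟨lam, hlam⟩ := hP (a + b) (S.add_mem haS hbS)
        set s := a + b with hs_def
        have hnil_s : IsNilpotent s := ⟨3, by
          rw [pow_succ, pow_two, mul_assoc]; exact hcube⟩
        have hnil_d : IsNilpotent (s - lam • 1) := ⟨2, by rw [pow_two]; exact hlam⟩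
        have hcs : Commute s (s - lam • 1) :=
          (Commute.refl s).sub_right ((Commute.one_right s).smul_right lam)
        have hnil_lam : IsNilpotent (lam • (1 : Module.End K V)) := by
          have := hcs.isNilpotent_sub hnil_s hnil_d
          simpa using this
        obtain ⟨k, hk⟩ := hnil_lam
        have hk0 : k ≠ 0 := by
          rintro rfl
          rw [pow_zero] at hk
          exact hone hk
        have hlam0 : lam = 0 := by
          rw [_root_.smul_pow, one_pow] at hk
          rcases smul_eq_zero.mp hk with h | h
          · exact pow_eq_zero_iff hk0 |>.mp h
          · exact absurd h hone
        rw [hlam0] at hlam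
        simpa using hlam
      smul_mem' := by
        rintro c x ⟨hxS, hx⟩
        exact ⟨S.smul_mem hxS c, by
          rw [smul_mul_assoc, mul_smul_comm, hx, smul_zero, smul_zero]⟩ } with hN_def
  have hNle : Module.finrank K N ≤ 2 := sqzero_dim_le hV N (fun n hn => hn.2)
  have hsub : S.toSubmodule ≤ (K ∙ (1 : Module.End K V)) ⊔ N := by
    intro a ha
    obtain ⟨lam, hlam⟩ := hP a ha
    have : a = lam • 1 + (a - lam • 1) := by abel
    rw [this]
    apply Submodule.add_mem
    · exact Submodule.mem_sup_left (Submodule.smul_mem _ lam (Submodule.mem_span_singleton_self _))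
    · refine Submodule.mem_sup_right ⟨?_, hlam⟩
      exact S.sub_mem ha (S.smul_mem S.one_mem lam)
  have h1 : Module.finrank K (K ∙ (1 : Module.End K V)) = 1 := finrank_span_singleton hone
  have heq := Submodule.finrank_sup_add_finrank_inf_eq (K ∙ (1 : Module.End K V)) N
  have hm := Submodule.finrank_mono hsub
  rw [← Subalgebra.finrank_toSubmodule]
  omega

lemma finrank_span_singleton_le' [FiniteDimensional K V] (x : V) :
    Module.finrank K (K ∙ x) ≤ 1 := by
  by_cases hx : x = 0
  · subst hx
    rw [Submodule.span_zero_singleton]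
    simp
  · rw [finrank_span_singleton hx]

lemma finrank_span_pair_le_two [FiniteDimensional K V] (x y : V) :
    Module.finrank K (span K {x, y}) ≤ 2 := by
  have h : span K ({x, y} : Set V) = (K ∙ x) ⊔ (K ∙ y) := by
    rw [show ({x, y} : Set V) = insert x {y} from rfl, Submodule.span_insert]
  rw [h]
  have := Submodule.finrank_sup_add_finrank_inf_eq (K ∙ x) (K ∙ y)
  have h1 := finrank_span_singleton_le' (K := K) x
  have h2 := finrank_span_singleton_le' (K := K) y
  omega

lemma not_quadratic_bound [FiniteDimensional K V] (hV : Module.finrank K V = 3)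
    (S : Subalgebra K (Module.End K V))
    (hcomm : ∀ a ∈ S, ∀ b ∈ S, a * b = b * a)
    {a : Module.End K V} (haS : a ∈ S)
    (hnP : ∀ lam : K, (a - lam • 1) * (a - lam • 1) ≠ 0) :
    Module.finrank K S ≤ 3 := by
  have hVnt : Nontrivial V := by
    apply Module.nontrivial_of_finrank_pos (R := K); omega
  have hEnt : Nontrivial (Module.End K V) := ⟨1, 0, by
    obtain ⟨v, hv⟩ := exists_ne (0 : V)
    intro h
    exact hv (by simpa using congrArg (fun f : Module.End K V => f v) h)⟩
  have hint : IsIntegral K a := Algebra.IsIntegral.isIntegral a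
  set m := minpoly K a with hm_def
  have hm0 : Polynomial.aeval a m = 0 := minpoly.aeval K a
  have hmonic : m.Monic := minpoly.monic hint
  have hmne : m ≠ 0 := hmonic.ne_zero
  have hdeg_le : m.natDegree ≤ 3 := by
    have hdvd : m ∣ a.charpoly := minpoly.dvd K a a.aeval_self_charpoly
    have := Polynomial.natDegree_le_of_dvd hdvd a.charpoly_monic.ne_zero
    rwa [a.charpoly_natDegree, hV] at this
  have hdeg_pos : 0 < m.natDegree := minpoly.natDegree_pos hint
  -- the evaluation-injectivity workhorse
  have evalinj : ∀ (n : Module.End K V), (∀ c ∈ S, c * n = n * c) → ∀ v : V,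
      span K {v, n v, n (n v)} = ⊤ → Module.finrank K S ≤ 3 := by
    intro n hn v hsp
    rw [← Subalgebra.finrank_toSubmodule, ← hV]
    apply eval_inj_bound S.toSubmodule v
    intro c hcS hcv
    apply zero_on_top
    rw [← hsp, span_le]
    have hcn : ∀ x : V, c x = 0 → c (n x) = 0 := by
      intro x hx
      calc c (n x) = (c * n) x := rfl
        _ = (n * c) x := by rw [hn c hcS]
        _ = n (c x) := rfl
        _ = 0 := by rw [hx, map_zero]
    rintro y (rfl | rfl | rfl)
    · exact hcv
    · exact hcn v hcv
    · exact hcn (n v) (hcn v hcv)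
  -- spanning from linear independence
  have span_top : ∀ (x y z : V), LinearIndependent K ![x, y, z] → span K {x, y, z} = ⊤ := by
    intro x y z hli
    apply Submodule.eq_top_of_finrank_eq
    have hr : Set.range ![x, y, z] = {x, y, z} := by
      ext t; simp [Matrix.range_cons, Matrix.range_empty]
      tauto
    have := finrank_span_eq_card hli
    rw [hr] at this
    rw [this, hV]
    simp
  -- commutation of S with a
  have hcomm_a : ∀ c ∈ S, c * a = a * c := fun c hc => hcomm c hc a haS
  obtain ⟨p, hpirr, hpdvd⟩ := Polynomial.exists_irreducible_of_natDegree_pos hdeg_pos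
  have hppos : 0 < p.natDegree := hpirr.natDegree_pos
  have hfin : FiniteMultiplicity p m := FiniteMultiplicity.of_not_isUnit hpirr.not_isUnit hmne
  obtain ⟨q, hq_eq, hq_ndvd⟩ := hfin.exists_eq_pow_mul_and_not_dvd
  set k := multiplicity p m with hk_def
  have hk1 : 1 ≤ k := Nat.one_le_iff_ne_zero.mpr (multiplicity_ne_zero.mpr hpdvd)
  have hq0 : q ≠ 0 := by
    intro h; rw [h, mul_zero] at hq_eq; exact hmne hq_eq
  have hpk0 : p ^ k ≠ 0 := pow_ne_zero k hpirr.ne_zero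
  have hdegm : m.natDegree = k * p.natDegree + q.natDegree := by
    rw [hq_eq, Polynomial.natDegree_mul hpk0 hq0, Polynomial.natDegree_pow]
  by_cases hqu : IsUnit q
  · -- m is (essentially) a prime power p^k
    have hqdeg : q.natDegree = 0 := Polynomial.natDegree_eq_zero_of_isUnit hqu
    obtain ⟨c, hc⟩ := Polynomial.natDegree_eq_zero.mp hqdeg
    have hc0 : c ≠ 0 := by rintro rfl; rw [← hc] at hq0; simp at hq0
    have haevpk : (Polynomial.aeval a p) ^ k = 0 := by
      have h1 : Polynomial.aeval a m = (Polynomial.aeval a p) ^ k * (c • 1) := by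
        rw [hq_eq, map_mul, map_pow, ← hc]
        congr 1
        rw [Polynomial.aeval_C, Algebra.algebraMap_eq_smul_one]
      rw [hm0, mul_smul_comm, mul_one] at h1
      rcases smul_eq_zero.mp h1.symm with h | h
      exacts [absurd h hc0, h]
    have hdp3 : p.natDegree ≤ 3 := by nlinarith
    interval_cases hdp : p.natDegree
    · -- deg p = 1
      have hkeq : k ≤ 3 := by omega
      have hp_eq : p = Polynomial.C (p.coeff 1) * Polynomial.X + Polynomial.C (p.coeff 0) :=
        Polynomial.eq_X_add_C_of_degree_le_one (Polynomial.natDegree_le_iff_degree_le.mp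
          (le_of_eq hdp))
      have hp1 : p.coeff 1 ≠ 0 := by
        have := Polynomial.leadingCoeff_ne_zero.mpr hpirr.ne_zero
        rwa [Polynomial.leadingCoeff, hdp] at this
      set p1 := p.coeff 1 with hp1_def
      set p0 := p.coeff 0 with hp0_def
      set lam := -(p0 / p1) with hlam_def
      set n := a - lam • 1 with hn_def
      have hpl : p1 * lam = -p0 := by
        rw [hlam_def]
        field_simp
      have haev : Polynomial.aeval a p = p1 • n := by
        rw [hp_eq, map_add, map_mul, Polynomial.aeval_C, Polynomial.aeval_X,
          Polynomial.aeval_C, hn_def, smul_sub, smul_smul, hpl]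
        rw [Algebra.algebraMap_eq_smul_one, Algebra.algebraMap_eq_smul_one]
        rw [neg_smul, sub_neg_eq_add, smul_mul_assoc, one_mul]
      have hnk : n ^ k = 0 := by
        rw [haev, _root_.smul_pow] at haevpk
        rcases smul_eq_zero.mp haevpk with h | h
        · exact absurd h (pow_ne_zero k hp1)
        · exact h
      by_cases hk2 : k ≤ 2
      · exfalso
        apply hnP lam
        have hn2 : n * n = 0 := by
          interval_cases k
          · rw [pow_one] at hnk; rw [hnk, mul_zero]
          · rw [pow_two] at hnk; exact hnk
        rw [hn_def] at hn2
        exact hn2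
      · have hk3' : k = 3 := by omega
        rw [hk3'] at hnk
        have hn2 : n * n ≠ 0 := by
          rw [hn_def]; exact hnP lam
        obtain ⟨v, hv⟩ : ∃ v, (n * n) v ≠ 0 := by
          by_contra hall; push_neg at hall
          exact hn2 (by ext x; simpa using hall x)
        have hn3app : ∀ x : V, n (n (n x)) = 0 := by
          intro x
          have : (n ^ 3) x = 0 := by rw [hnk]; rfl
          rw [pow_succ, pow_two] at this
          exact this
        have hli : LinearIndependent K ![v, n v, n (n v)] := by
          rw [Fintype.linearIndependent_iff]
          intro g hg
          rw [Fin.sum_univ_three] at hg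
          simp only [Matrix.cons_val_zero, Matrix.cons_val_one, Matrix.head_cons,
            Matrix.cons_val_two, Matrix.tail_cons] at hg
          have h0 : g 0 = 0 := by
            have := congrArg (fun x : V => n (n x)) hg
            simp only [map_add, map_smul, map_zero] at this
            rw [hn3app v] at this
            simp only [map_zero, smul_zero, add_zero] at this
            have : g 0 • n (n v) = 0 := this
            rcases smul_eq_zero.mp this with h | h
            · exact h
            · exact absurd h hv
          rw [h0, zero_smul, zero_add] at hg
          have h1 : g 1 = 0 := by
            have := congrArg (fun x : V => n x) hg
            simp only [map_add, map_smul, map_zero] at this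
            rw [hn3app v] at this
            simp only [smul_zero, add_zero] at this
            rcases smul_eq_zero.mp this with h | h
            · exact h
            · exact absurd h hv
          rw [h1, zero_smul, zero_add] at hg
          have h2 : g 2 = 0 := by
            rcases smul_eq_zero.mp hg with h | h
            · exact h
            · exact absurd h hv
          intro i; fin_cases i <;> assumption
        refine evalinj n ?_ v (span_top _ _ _ hli)
        intro c hc
        rw [hn_def, mul_sub, sub_mul, hcomm_a c hc, mul_smul_comm, smul_mul_assoc,
          mul_one, one_mul]
    · -- deg p = 2
      have hk1' : k = 1 := by omega
      have hmp : m = p * Polynomial.C c := by rw [hq_eq, hk1', pow_one, ← hc]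
      have hmirr : Irreducible m := by
        have hass : Associated p m :=
          ⟨(Polynomial.isUnit_C.mpr (isUnit_iff_ne_zero.mpr hc0)).unit, by rw [hmp]; rfl⟩
        exact hass.irreducible hpirr
      have hmdeg : m.natDegree = 2 := by omega
      have noev : ∀ z : V, z ≠ 0 → ∀ t : K, a z = t • z → False := by
        intro z hz t ht
        have happ : (Polynomial.aeval a (Polynomial.X - Polynomial.C t)) z = 0 := by
          simp only [map_sub, Polynomial.aeval_X, Polynomial.aeval_C,
            Algebra.algebraMap_eq_smul_one, LinearMap.sub_apply, LinearMap.smul_apply,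
            Module.End.one_apply, ht, sub_self]
        have hne : (Polynomial.X - Polynomial.C t) ≠ 0 := Polynomial.X_sub_C_ne_zero t
        have hdeg : (Polynomial.X - Polynomial.C t).natDegree < m.natDegree := by
          rw [Polynomial.natDegree_X_sub_C, hmdeg]; omega
        exact hz (bezout_kill hm0 hmirr hne hdeg happ)
      set d : Polynomial K := Polynomial.X ^ 2 - m with hd
      have hddeg : d.natDegree ≤ 1 := by
        rw [Polynomial.natDegree_le_iff_coeff_eq_zero]
        intro i hi
        rw [hd, Polynomial.coeff_sub, Polynomial.coeff_X_pow]
        rcases eq_or_lt_of_le (show 2 ≤ i by omega) with h | h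
        · rw [← h, if_pos rfl]
          have : m.coeff 2 = 1 := by
            have := hmonic.coeff_natDegree
            rwa [hmdeg] at this
          rw [this, sub_self]
        · rw [if_neg (by omega), Polynomial.coeff_eq_zero_of_natDegree_lt (by omega),
            zero_sub, neg_eq_zero]
      have hd_eq : d = Polynomial.C (d.coeff 1) * Polynomial.X + Polynomial.C (d.coeff 0) :=
        Polynomial.eq_X_add_C_of_degree_le_one (Polynomial.natDegree_le_iff_degree_le.mp hddeg)
      set e := d.coeff 1 with he_def
      set f := d.coeff 0 with hf_def
      have ha2 : a * a = e • a + f • 1 := by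
        have h1 : Polynomial.aeval a d = a * a := by
          rw [hd, map_sub, hm0, map_pow, Polynomial.aeval_X, pow_two, sub_zero]
        have h2 : Polynomial.aeval a d = e • a + f • 1 := by
          rw [hd_eq, map_add, map_mul, Polynomial.aeval_C, Polynomial.aeval_X,
            Polynomial.aeval_C, Algebra.algebraMap_eq_smul_one,
            Algebra.algebraMap_eq_smul_one, smul_mul_assoc, one_mul]
        rw [← h1, h2]
      have haaz : ∀ z : V, a (a z) = e • a z + f • z := by
        intro z
        have := congrArg (fun F : Module.End K V => F z) ha2
        simpa only [Module.End.mul_apply, LinearMap.add_apply, LinearMap.smul_apply,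
          Module.End.one_apply] using this
      have hWinv : ∀ z : V, ∀ y ∈ span K {z, a z}, a y ∈ span K {z, a z} := by
        intro z y hy
        have hsp : span K ({z, a z} : Set V) = (K ∙ z) ⊔ (K ∙ (a z)) := by
          rw [show ({z, a z} : Set V) = insert z {a z} from rfl, Submodule.span_insert]
        rw [hsp] at hy
        obtain ⟨y₁, hy₁, y₂, hy₂, rfl⟩ := Submodule.mem_sup.mp hy
        obtain ⟨α, rfl⟩ := mem_span_singleton.mp hy₁
        obtain ⟨β, rfl⟩ := mem_span_singleton.mp hy₂
        rw [map_add, map_smul, map_smul, haaz z]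
        have hz1 : z ∈ span K ({z, a z} : Set V) := subset_span (by simp)
        have hz2 : a z ∈ span K ({z, a z} : Set V) := subset_span (by simp)
        apply Submodule.add_mem
        · exact Submodule.smul_mem _ _ hz2
        · apply Submodule.smul_mem
          exact Submodule.add_mem _ (Submodule.smul_mem _ _ hz2) (Submodule.smul_mem _ _ hz1)
      have hWrank : ∀ z : V, z ≠ 0 → Module.finrank K (span K {z, a z}) = 2 := by
        intro z hz
        have hnosp : a z ∉ (K ∙ z) := by
          intro h
          obtain ⟨t, ht⟩ := mem_span_singleton.mp h
          exact noev z hz t ht.symm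
        have := finrank_span_pair_ge_two (K := K) hz hnosp
        have := finrank_span_pair_le_two (K := K) z (a z)
        omega
      obtain ⟨v₁, hv₁⟩ := exists_ne (0 : V)
      set W₁ := span K ({v₁, a v₁} : Set V) with hW₁def
      have hW₁ne : ¬ ((⊤ : Submodule K V) ≤ W₁) := by
        intro h
        have h3 := hWrank v₁ hv₁
        rw [← hW₁def, top_le_iff.mp h, finrank_top] at h3
        omega
      obtain ⟨v₂, -, hv₂W⟩ := SetLike.not_le_iff_exists.mp hW₁ne
      have hv₂0 : v₂ ≠ 0 := by rintro rfl; exact hv₂W (Submodule.zero_mem _)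
      set W₂ := span K ({v₂, a v₂} : Set V) with hW₂def
      have hr₁ : Module.finrank K W₁ = 2 := hWrank v₁ hv₁
      have hr₂ : Module.finrank K W₂ = 2 := hWrank v₂ hv₂0
      have hsuple : Module.finrank K (W₁ ⊔ W₂ : Submodule K V) ≤ 3 := by
        have := Submodule.finrank_le (W₁ ⊔ W₂ : Submodule K V)
        omega
      have heq := Submodule.finrank_sup_add_finrank_inf_eq W₁ W₂
      have hinfle : Module.finrank K (W₁ ⊓ W₂ : Submodule K V) ≤ 2 := by
        have := Submodule.finrank_mono (inf_le_left : W₁ ⊓ W₂ ≤ W₁)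
        omega
      have hZ1 : Module.finrank K (W₁ ⊓ W₂ : Submodule K V) = 1 := by
        rcases Nat.lt_or_ge (Module.finrank K (W₁ ⊓ W₂ : Submodule K V)) 2 with h | h
        · omega
        · exfalso
          have h2 : Module.finrank K (W₁ ⊓ W₂ : Submodule K V) = 2 := by omega
          have hinfW₁ : W₁ ⊓ W₂ = W₁ :=
            Submodule.eq_of_le_of_finrank_le inf_le_left (by omega)
          have hW₁leW₂ : W₁ ≤ W₂ := hinfW₁ ▸ inf_le_right
          have : W₁ = W₂ := Submodule.eq_of_le_of_finrank_le hW₁leW₂ (by omega)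
          exact hv₂W (this ▸ subset_span (by simp))
      obtain ⟨z, hzZ, hz0⟩ := exists_ne_zero_of_finrank_pos (W := W₁ ⊓ W₂) (by omega)
      have hZspan : (K ∙ z) = W₁ ⊓ W₂ := span_singleton_eq hZ1 hzZ hz0
      have hazZ : a z ∈ W₁ ⊓ W₂ := ⟨hWinv v₁ z hzZ.1, hWinv v₂ z hzZ.2⟩
      rw [← hZspan] at hazZ
      obtain ⟨t, ht⟩ := mem_span_singleton.mp hazZ
      exact (noev z hz0 t ht.symm).elim
    · -- deg p = 3
      have hk1' : k = 1 := by omega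
      have hmp : m = p * Polynomial.C c := by rw [hq_eq, hk1', pow_one, ← hc]
      have hmirr : Irreducible m := by
        have hass : Associated p m :=
          ⟨(Polynomial.isUnit_C.mpr (isUnit_iff_ne_zero.mpr hc0)).unit, by rw [hmp]; rfl⟩
        exact hass.irreducible hpirr
      have hmdeg : m.natDegree = 3 := by omega
      obtain ⟨v, hv⟩ := exists_ne (0 : V)
      have hli : LinearIndependent K ![v, a v, a (a v)] := by
        rw [Fintype.linearIndependent_iff]
        intro g hg
        rw [Fin.sum_univ_three] at hg
        simp only [Matrix.cons_val_zero, Matrix.cons_val_one, Matrix.head_cons,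
          Matrix.cons_val_two, Matrix.tail_cons] at hg
        by_contra hgne
        push_neg at hgne
        obtain ⟨i, hi⟩ := hgne
        set qq : Polynomial K := Polynomial.C (g 0) + Polynomial.C (g 1) * Polynomial.X +
          Polynomial.C (g 2) * Polynomial.X ^ 2 with hqq
        have hcoe : ∀ j : Fin 3, qq.coeff j = g j := by
          intro j
          fin_cases j <;>
            simp [hqq, Polynomial.coeff_add, Polynomial.coeff_C, Polynomial.coeff_C_mul,
              Polynomial.coeff_X, Polynomial.coeff_X_pow]
        have hqq0 : qq ≠ 0 := by
          intro h
          apply hi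
          have := hcoe i
          rw [h, Polynomial.coeff_zero] at this
          exact this.symm
        have hqqdeg : qq.natDegree ≤ 2 := by
          refine le_trans (Polynomial.natDegree_add_le _ _) ?_
          simp only [max_le_iff]
          constructor
          · refine le_trans (Polynomial.natDegree_add_le _ _) ?_
            simp only [max_le_iff, Polynomial.natDegree_C]
            refine ⟨by omega, le_trans (Polynomial.natDegree_C_mul_le _ _) ?_⟩
            simp [Polynomial.natDegree_X]
          · refine le_trans (Polynomial.natDegree_C_mul_le _ _) ?_
            simp [Polynomial.natDegree_X_pow]
        have happ : (Polynomial.aeval a qq) v = 0 := by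
          rw [hqq]
          simp only [map_add, map_mul, map_pow, Polynomial.aeval_C, Polynomial.aeval_X,
            Algebra.algebraMap_eq_smul_one, LinearMap.add_apply, Module.End.mul_apply,
            LinearMap.smul_apply, Module.End.one_apply, pow_two]
          simpa only [LinearMap.smul_apply, Module.End.one_apply, Module.End.mul_apply]
            using hg
        exact hv (bezout_kill hm0 hmirr hqq0 (by omega) happ)
      exact evalinj a hcomm_a v (span_top _ _ _ hli)
  · -- genuine splitting m = p^k * q with coprime factors
    set F : Polynomial K := p ^ k with hF_def
    have hcop : IsCoprime F q := (hpirr.coprime_iff_not_dvd.mpr hq_ndvd).pow_left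
    have haevm : Polynomial.aeval a F * Polynomial.aeval a q = 0 := by
      rw [← map_mul, ← hq_eq, hm0]
    have hdegF : F.natDegree = k * p.natDegree := by
      rw [hF_def, Polynomial.natDegree_pow]
    have hdegq : 0 < q.natDegree := by
      rcases Nat.eq_zero_or_pos q.natDegree with h | h
      · exfalso
        obtain ⟨c', hc'⟩ := Polynomial.natDegree_eq_zero.mp h
        have hc'0 : c' ≠ 0 := by rintro rfl; rw [← hc'] at hq0; simp at hq0
        exact hqu (hc' ▸ Polynomial.isUnit_C.mpr (isUnit_iff_ne_zero.mpr hc'0))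
      · exact h
    set V₁ := LinearMap.ker (Polynomial.aeval a F) with hV₁def
    set V₂ := LinearMap.ker (Polynomial.aeval a q) with hV₂def
    obtain ⟨α, β, hab⟩ := hcop
    have habx : ∀ x : V, (Polynomial.aeval a α) ((Polynomial.aeval a F) x) +
        (Polynomial.aeval a β) ((Polynomial.aeval a q) x) = x := by
      intro x
      have := congrArg (fun G : Module.End K V => G x) (congrArg (Polynomial.aeval a) hab)
      simpa only [map_add, map_mul, map_one, LinearMap.add_apply, Module.End.mul_apply,
        Module.End.one_apply] using this
    have hdis : V₁ ⊓ V₂ = ⊥ := by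
      rw [eq_bot_iff]
      rintro x ⟨hx1, hx2⟩
      have hx1' : (Polynomial.aeval a F) x = 0 := hx1
      have hx2' : (Polynomial.aeval a q) x = 0 := hx2
      have := habx x
      rw [hx1', hx2', map_zero, map_zero, add_zero] at this
      simp [← this]
    have hmul0 : ∀ x : V, (Polynomial.aeval a (F * q)) x = 0 := by
      intro x
      rw [map_mul, haevm]
      rfl
    have hsup : V₁ ⊔ V₂ = ⊤ := by
      rw [eq_top_iff]
      intro x _
      rw [← habx x]
      apply Submodule.add_mem
      · apply Submodule.mem_sup_right
        rw [hV₂def, LinearMap.mem_ker]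
        have h1 : (Polynomial.aeval a q) ((Polynomial.aeval a α) ((Polynomial.aeval a F) x)) =
            (Polynomial.aeval a (q * (α * F))) x := by
          rw [map_mul, map_mul]; rfl
        have h2 : q * (α * F) = α * (F * q) := by ring
        rw [h1, h2, map_mul]
        show (Polynomial.aeval a α) ((Polynomial.aeval a (F * q)) x) = 0
        rw [hmul0 x, map_zero]
      · apply Submodule.mem_sup_left
        rw [hV₁def, LinearMap.mem_ker]
        have h1 : (Polynomial.aeval a F) ((Polynomial.aeval a β) ((Polynomial.aeval a q) x)) =
            (Polynomial.aeval a (F * (β * q))) x := by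
          rw [map_mul, map_mul]; rfl
        have h2 : F * (β * q) = β * (F * q) := by ring
        rw [h1, h2, map_mul]
        show (Polynomial.aeval a β) ((Polynomial.aeval a (F * q)) x) = 0
        rw [hmul0 x, map_zero]
    have hV₁ne : V₁ ≠ ⊥ := by
      intro h
      have hinj : Function.Injective (Polynomial.aeval a F) := by
        rw [← LinearMap.ker_eq_bot, ← hV₁def]; exact h
      have hq' : Polynomial.aeval a q = 0 := by
        ext x
        apply hinj
        have := congrArg (fun G : Module.End K V => G x) haevm
        simpa only [Module.End.mul_apply, LinearMap.zero_apply, map_zero] using this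
      have hdvd2 : m ∣ q := minpoly.dvd K a hq'
      have := Polynomial.natDegree_le_of_dvd hdvd2 hq0
      nlinarith
    have hV₂ne : V₂ ≠ ⊥ := by
      intro h
      have hinj : Function.Injective (Polynomial.aeval a q) := by
        rw [← LinearMap.ker_eq_bot, ← hV₂def]; exact h
      have hqF : Polynomial.aeval a q * Polynomial.aeval a F = 0 := by
        rw [← map_mul, mul_comm, map_mul, haevm]
      have hF' : Polynomial.aeval a F = 0 := by
        ext x
        apply hinj
        have := congrArg (fun G : Module.End K V => G x) hqF
        simpa only [Module.End.mul_apply, LinearMap.zero_apply, map_zero] using this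
      have hdvd2 : m ∣ F := minpoly.dvd K a hF'
      have := Polynomial.natDegree_le_of_dvd hdvd2 hpk0
      omega
    have hfr : Module.finrank K V₁ + Module.finrank K V₂ = 3 := by
      have h := Submodule.finrank_sup_add_finrank_inf_eq V₁ V₂
      rw [hdis, hsup, finrank_top, hV, finrank_bot] at h
      omega
    have hfr₁ : 0 < Module.finrank K V₁ :=
      Nat.pos_of_ne_zero (fun h => hV₁ne (Submodule.finrank_eq_zero.mp h))
    have hfr₂ : 0 < Module.finrank K V₂ :=
      Nat.pos_of_ne_zero (fun h => hV₂ne (Submodule.finrank_eq_zero.mp h))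
    have hinv : ∀ (g : Polynomial K), ∀ c ∈ S, ∀ x ∈ LinearMap.ker (Polynomial.aeval a g),
        c x ∈ LinearMap.ker (Polynomial.aeval a g) := by
      intro g c hc x hx
      rw [LinearMap.mem_ker] at hx ⊢
      have hcom : Commute c (Polynomial.aeval a g) :=
        commute_aeval (show Commute a c from (hcomm_a c hc).symm) g
      calc (Polynomial.aeval a g) (c x) = ((Polynomial.aeval a g) * c) x := rfl
        _ = (c * (Polynomial.aeval a g)) x := by rw [← hcom.eq]
        _ = c ((Polynomial.aeval a g) x) := rfl
        _ = 0 := by rw [hx, map_zero]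
    rcases Nat.lt_or_ge (Module.finrank K V₁) 2 with h | h
    · exact split_bound hV S hcomm V₁ V₂ (by omega) (by omega) hdis hsup
        (hinv F) (hinv q)
    · exact split_bound hV S hcomm V₂ V₁ (by omega) (by omega)
        (by rw [inf_comm]; exact hdis) (by rw [sup_comm]; exact hsup)
        (hinv q) (hinv F)

theorem main_endo [FiniteDimensional K V] (hV : Module.finrank K V = 3)
    (S : Subalgebra K (Module.End K V))
    (hcomm : ∀ a ∈ S, ∀ b ∈ S, a * b = b * a) :
    Module.finrank K S ≤ 3 := by
  by_cases hP : ∀ a ∈ S, ∃ lam : K, (a - lam • 1) * (a - lam • 1) = 0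
  · exact all_quadratic_bound hV S hcomm hP
  · push_neg at hP
    obtain ⟨a, haS, hnP⟩ := hP
    exact not_quadratic_bound hV S hcomm haS hnP

end Schur3

set_option synthInstance.maxHeartbeats 1000000 in
set_option maxHeartbeats 1000000 in
/-- Schur's theorem in dimension 3: a commutative subalgebra of `M₃(K)` has
dimension at most 3. -/
theorem commutative_subalgebra_dim_le {K : Type*} [Field K]
    (A : Subalgebra K (Matrix (Fin 3) (Fin 3) K))
    (hcomm : ∀ a ∈ A, ∀ b ∈ A, a * b = b * a) :
    Module.finrank K A ≤ 3 := by
  let E : Module.End K (Fin 3 → K) ≃ₐ[K] Matrix (Fin 3) (Fin 3) K := algEquivMatrix'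
  let S : Subalgebra K (Module.End K (Fin 3 → K)) := A.map (E.symm : _ →ₐ[K] _)
  have hScomm : ∀ a ∈ S, ∀ b ∈ S, a * b = b * a := by
    rintro x ⟨x0, hx0, rfl⟩ y ⟨y0, hy0, rfl⟩
    rw [← map_mul, ← map_mul, hcomm x0 hx0 y0 hy0]
  have hfr : Module.finrank K A = Module.finrank K S :=
    (E.symm.subalgebraMap A).toLinearEquiv.finrank_eq
  rw [hfr]
  exact Schur3.main_endo (by simp) S hScomm
end
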